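/- arXiv:1807.03294 — 2 statements merged into one kernel-verified Lean document; each statement's English description precedes it below -/
import Mathlib

section
/- Let λ be a partition with at most n parts. Then, as polynomials in ℤ[β][x_1,…,x_n], 𝔊_λ(x_1,…,x_n;β) = Σ_Λ ( Π_{j=1}^n x_j^{|λ^{(j)}| − |λ^{(j−1)}|} ) · Π_{j=2}^n (1 + βx_j)^{m_j(Λ)}, where the sum runs over all Gelfand–Tsetlin patterns Λ = (λ^{(0)},…,λ^{(n)}) with top row λ, and m_j(Λ) = #{ i ≥ 1 : λ^{(j)}_{i+1} < λ^{(j−1)}_i } is the number of markable entries in row j. -/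
open scoped Classical

noncomputable section

namespace SVTCrystal

/-- A filling assigns to each (row, column) position (0-indexed) a finite set of entries. -/
abbrev Filling : Type := ℕ → ℕ → Finset ℕ

/-- `lam` is a partition shape with at most `n` rows. -/
def IsPartitionShape (n : ℕ) (lam : ℕ → ℕ) : Prop :=
  (∀ r, lam (r + 1) ≤ lam r) ∧ (∀ r, n ≤ r → lam r = 0)

/-- Semistandard set-valued tableau of shape `lam` with entries in `{1,…,n}`. -/
structure IsSVT (n : ℕ) (lam : ℕ → ℕ) (t : Filling) : Prop where
  boxNonempty : ∀ r c, c < lam r → (t r c).Nonempty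
  emptyOutside : ∀ r c, ¬ c < lam r → t r c = ∅
  entryBounds : ∀ r c a, a ∈ t r c → 1 ≤ a ∧ a ≤ n
  rowWeak : ∀ r c a b, a ∈ t r c → b ∈ t r (c + 1) → a ≤ b
  colStrict : ∀ r c a b, a ∈ t r c → b ∈ t (r + 1) c → a < b

/-- Semistandard Young tableau: a set-valued tableau all of whose boxes are singletons. -/
def IsSSYT (n : ℕ) (lam : ℕ → ℕ) (t : Filling) : Prop :=
  IsSVT n lam t ∧ ∀ r c, c < lam r → (t r c).card = 1

/-- The weight: `wt n lam t j` is the number of boxes of `t` containing the entry `j`. -/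
def wt (n : ℕ) (lam : ℕ → ℕ) (t : Filling) (j : ℕ) : ℕ :=
  ((Finset.range n ×ˢ Finset.range (lam 0)).filter (fun p => j ∈ t p.1 p.2)).card

/-- The excess: total number of extra entries. -/
def excess (n : ℕ) (lam : ℕ → ℕ) (t : Filling) : ℕ :=
  ∑ p ∈ Finset.range n ×ˢ Finset.range (lam 0), ((t p.1 p.2).card - 1)

/-- Column `c` contains the entry `a`. -/
def colHas (n : ℕ) (t : Filling) (a c : ℕ) : Prop := ∃ r, r < n ∧ a ∈ t r c

/-- The sign of column `c` for the `i`-signature rule: `+` (true) if the column contains `i`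
but not `i+1`, `-` (false) if it contains `i+1` but not `i`. -/
def colSign (n : ℕ) (t : Filling) (i c : ℕ) : Option Bool :=
  if colHas n t i c ∧ ¬ colHas n t (i + 1) c then some true
  else if colHas n t (i + 1) c ∧ ¬ colHas n t i c then some false
  else none

/-- The number of `-` (false) signs left uncanceled after scanning the word left-to-right,
iteratively canceling `-+` pairs. -/
def mctr (w : List Bool) : ℕ := w.foldl (fun cnt b => if b then cnt - 1 else cnt + 1) 0

/-- The number of `+` (true) signs left uncanceled, scanning right-to-left. -/
def pctr (w : List Bool) : ℕ := w.foldr (fun b cnt => if b then cnt + 1 else cnt - 1) 0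

/-- The word of column signs of the columns before column `c`. -/
def colWordBefore (n : ℕ) (t : Filling) (i c : ℕ) : List Bool :=
  (List.range c).filterMap (colSign n t i)

/-- The word of column signs of the columns after column `c` (among columns `< ncols`). -/
def colWordAfter (n ncols : ℕ) (t : Filling) (i c : ℕ) : List Bool :=
  ((List.range ncols).drop (c + 1)).filterMap (colSign n t i)

/-- Column `c` carries an uncanceled `+` for the `i`-signature rule. -/
def PlusCol (n ncols : ℕ) (t : Filling) (i c : ℕ) : Prop :=
  c < ncols ∧ colSign n t i c = some true ∧ mctr (colWordBefore n t i c) = 0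

/-- Column `c` carries an uncanceled `-` for the `i`-signature rule. -/
def MinusCol (n ncols : ℕ) (t : Filling) (i c : ℕ) : Prop :=
  c < ncols ∧ colSign n t i c = some false ∧ pctr (colWordAfter n ncols t i c) = 0

/-- Column `c` is the rightmost uncanceled `+`. -/
def fBoxCol (n ncols : ℕ) (t : Filling) (i c : ℕ) : Prop :=
  PlusCol n ncols t i c ∧ ∀ c', PlusCol n ncols t i c' → c' ≤ c

/-- Column `c` is the leftmost uncanceled `-`. -/
def eBoxCol (n ncols : ℕ) (t : Filling) (i c : ℕ) : Prop :=
  MinusCol n ncols t i c ∧ ∀ c', MinusCol n ncols t i c' → c ≤ c'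

/-- Replace the content of the box in row `r`, column `c` by `A`. -/
def updateBox (t : Filling) (r c : ℕ) (A : Finset ℕ) : Filling :=
  fun r' c' => if r' = r ∧ c' = c then A else t r' c'

/-- The set-valued crystal operator `f_i` (signature rule). -/
def fRaw (n : ℕ) (lam : ℕ → ℕ) (i : ℕ) (t : Filling) : Option Filling :=
  if h : ∃ c, fBoxCol n (lam 0) t i c then
    let c := Classical.choose h
    if hr : ∃ r, r < n ∧ i ∈ t r c then
      let r := Classical.choose hr
      if i ∈ t r (c + 1) then
        some (updateBox (updateBox t r (c + 1) ((t r (c + 1)).erase i)) r c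
          (insert (i + 1) (t r c)))
      else some (updateBox t r c (insert (i + 1) ((t r c).erase i)))
    else none
  else none

/-- The set-valued crystal operator `e_i` (signature rule). -/
def eRaw (n : ℕ) (lam : ℕ → ℕ) (i : ℕ) (t : Filling) : Option Filling :=
  if h : ∃ c, eBoxCol n (lam 0) t i c then
    let c := Classical.choose h
    if hr : ∃ r, r < n ∧ (i + 1) ∈ t r c then
      let r := Classical.choose hr
      if 0 < c ∧ (i + 1) ∈ t r (c - 1) then
        some (updateBox (updateBox t r (c - 1) ((t r (c - 1)).erase (i + 1))) r c
          (insert i (t r c)))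
      else some (updateBox t r c (insert i ((t r c).erase (i + 1))))
    else none
  else none

/-- Iterate a partially-defined operator. -/
def iterOpt (g : Filling → Option Filling) : ℕ → Filling → Option Filling
  | 0, t => some t
  | m + 1, t => (iterOpt g m t).bind g

/-- Highest weight (Yamanouchi) elements. -/
def IsYamanouchi (n : ℕ) (lam : ℕ → ℕ) (t : Filling) : Prop :=
  ∀ i, 1 ≤ i → i < n → eRaw n lam i t = none

/-- Closure of `t0` under the crystal operators `e_i`, `f_i` for `1 ≤ i < n`. -/
inductive Reach (n : ℕ) (lam : ℕ → ℕ) (t0 : Filling) : Filling → Prop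
  | base : Reach n lam t0 t0
  | stepF : ∀ {t t' : Filling} (i : ℕ), 1 ≤ i → i < n → Reach n lam t0 t →
      fRaw n lam i t = some t' → Reach n lam t0 t'
  | stepE : ∀ {t t' : Filling} (i : ℕ), 1 ≤ i → i < n → Reach n lam t0 t →
      eRaw n lam i t = some t' → Reach n lam t0 t'

/-- The one-row partition `(s)`. -/
def rowShape (s : ℕ) : ℕ → ℕ := fun r => if r = 0 then s else 0

/-- The one-column partition `(1^k)`. -/
def colShape (k : ℕ) : ℕ → ℕ := fun r => if r < k then 1 else 0

/-- The hook partition `(s, 1^e)`. -/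
def hookShape (s e : ℕ) : ℕ → ℕ := fun r => if r = 0 then s else if r ≤ e then 1 else 0

/-! ### K-theory crystal operators (for single rows and single columns) -/

/-- Some box of the tableau contains the entry `a`. -/
def containsEntry (n : ℕ) (lam : ℕ → ℕ) (t : Filling) (a : ℕ) : Prop :=
  ∃ r c, r < n ∧ c < lam r ∧ a ∈ t r c

/-- `p` is the rightmost box of `t` containing `i`. -/
def KBoxF (n : ℕ) (lam : ℕ → ℕ) (t : Filling) (i : ℕ) (p : ℕ × ℕ) : Prop :=
  p.1 < n ∧ p.2 < lam p.1 ∧ i ∈ t p.1 p.2 ∧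
    ∀ q : ℕ × ℕ, q.1 < n → q.2 < lam q.1 → i ∈ t q.1 q.2 → q.2 ≤ p.2

/-- The K-crystal operator `f_i^K`: if `i` occurs in `t` and `i+1` does not, add `i+1` to
the rightmost box containing `i`; otherwise `0`. -/
def fK (n : ℕ) (lam : ℕ → ℕ) (i : ℕ) (t : Filling) : Option Filling :=
  if h : (∃ p : ℕ × ℕ, KBoxF n lam t i p) ∧ ¬ containsEntry n lam t (i + 1) then
    let p := Classical.choose h.1
    some (updateBox t p.1 p.2 (insert (i + 1) (t p.1 p.2)))
  else none

/-- The K-crystal operator `e_i^K`: delete `i+1` from the box containing both `i` and `i+1`,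
if such a box exists; otherwise `0`. -/
def eK (n : ℕ) (lam : ℕ → ℕ) (i : ℕ) (t : Filling) : Option Filling :=
  if h : ∃ p : ℕ × ℕ, p.1 < n ∧ p.2 < lam p.1 ∧ i ∈ t p.1 p.2 ∧ (i + 1) ∈ t p.1 p.2 then
    let p := Classical.choose h
    some (updateBox t p.1 p.2 ((t p.1 p.2).erase (i + 1)))
  else none

/-- `t'` is the result of applying `g` to `t` as many times as possible. -/
def MaxApply (g : Filling → Option Filling) (t t' : Filling) : Prop :=
  (∃ m, iterOpt g m t = some t') ∧ g t' = none

/-- One Demazure step: apply `e_i` as many times as possible, then `e_i^K` as many times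
as possible (here `eKop i` is the `i`-th K-operator). -/
def DemStep (n : ℕ) (lam : ℕ → ℕ) (eKop : ℕ → Filling → Option Filling) (i : ℕ)
    (t t' : Filling) : Prop :=
  ∃ t1, MaxApply (eRaw n lam i) t t1 ∧ MaxApply (eKop i) t1 t'

/-- `DemReach n lam eKop [i₁,…,iℓ] t u` holds when
`u = (e_{iℓ}^K)^max e_{iℓ}^max ⋯ (e_{i₁}^K)^max e_{i₁}^max t`. -/
def DemReach (n : ℕ) (lam : ℕ → ℕ) (eKop : ℕ → Filling → Option Filling) :
    List ℕ → Filling → Filling → Prop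
  | [], t, u => t = u
  | i :: rest, t, u => ∃ t2, DemStep n lam eKop i t t2 ∧ DemReach n lam eKop rest t2 u

/-- The minimal highest weight tableau `u_λ`, whose row `r` boxes are all `{r+1}`. -/
def uTab (lam : ℕ → ℕ) : Filling := fun r c => if c < lam r then {r + 1} else ∅

/-- The K-Demazure crystal associated with a word `[i₁,…,iℓ]`. -/
def KDem (n : ℕ) (lam : ℕ → ℕ) (eKop : ℕ → Filling → Option Filling) (word : List ℕ) :
    Set Filling :=
  {t | IsSVT n lam t ∧ DemReach n lam eKop word t (uTab lam)}

/-! ### Permutations and reduced words -/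

/-- The permutation `s_{i₁} ⋯ s_{iℓ}` of a word `[i₁,…,iℓ]`, where `s_i` swaps `i`, `i+1`. -/
def wordPerm (word : List ℕ) : Equiv.Perm ℕ :=
  (word.map fun i => Equiv.swap i (i + 1)).prod

/-- `word` is a reduced word for `w` in the Coxeter generators `s_1, …, s_{n-1}`. -/
def IsReducedWord (n : ℕ) (w : Equiv.Perm ℕ) (word : List ℕ) : Prop :=
  (∀ i ∈ word, 1 ≤ i ∧ i < n) ∧ wordPerm word = w ∧
    ∀ word' : List ℕ, (∀ i ∈ word', 1 ≤ i ∧ i < n) → wordPerm word' = w →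
      word.length ≤ word'.length

/-- The Coxeter length of a permutation of `{1,…,n}`. -/
def permLength (n : ℕ) (σ : Equiv.Perm ℕ) : ℕ :=
  sInf {l | ∃ word : List ℕ, (∀ i ∈ word, 1 ≤ i ∧ i < n) ∧ wordPerm word = σ ∧
    word.length = l}

/-- The parabolic subgroup generated by `s_2, …, s_{n-1}`. -/
def parabolic (n : ℕ) : Subgroup (Equiv.Perm ℕ) :=
  Subgroup.closure {σ | ∃ i, 2 ≤ i ∧ i < n ∧ σ = Equiv.swap i (i + 1)}

/-! ### Polynomials -/

/-- Polynomials in `x₁, x₂, …` over `ℤ[β]`; the variable `β` is `Polynomial.X`. -/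
abbrev KPoly : Type := MvPolynomial ℕ (Polynomial ℤ)

/-- The scalar `β`. -/
def betaP : KPoly := MvPolynomial.C Polynomial.X

/-- The monomial `x^{wt(T)} = x₁^{wt₁} ⋯ xₙ^{wtₙ}`. -/
def xwt (n : ℕ) (lam : ℕ → ℕ) (t : Filling) : KPoly :=
  ∏ j ∈ Finset.Icc 1 n, (MvPolynomial.X j : KPoly) ^ wt n lam t j

/-- The β-character `∑_{T ∈ S} β^{excess T} x^{wt T}` of a set of tableaux. -/
def charSet (n : ℕ) (lam : ℕ → ℕ) (S : Set Filling) : KPoly :=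
  ∑ᶠ t ∈ S, betaP ^ excess n lam t * xwt n lam t

/-- The symmetric Grothendieck polynomial `𝔊_λ(x₁,…,xₙ; β)`. -/
def Groth (n : ℕ) (lam : ℕ → ℕ) : KPoly :=
  charSet n lam {t | IsSVT n lam t}

/-- The Schur polynomial `s_μ(x₁,…,xₙ)`. -/
def SchurP (n : ℕ) (mu : ℕ → ℕ) : KPoly :=
  ∑ᶠ t ∈ {t : Filling | IsSSYT n mu t}, xwt n mu t

/-- The numerator defining the Demazure–Lascoux operator `ϖ_i`. -/
def DLnum (i : ℕ) (f : KPoly) : KPoly :=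
  (MvPolynomial.X i + betaP * MvPolynomial.X i * MvPolynomial.X (i + 1)) * f -
    (MvPolynomial.X (i + 1) + betaP * MvPolynomial.X i * MvPolynomial.X (i + 1)) *
      (MvPolynomial.rename (Equiv.swap i (i + 1)) f)

/-- `DL` implements the Demazure–Lascoux operators `ϖ_i` for `1 ≤ i < n`:
`(x_i - x_{i+1}) · ϖ_i f` equals the defining numerator. -/
def IsDLOp (n : ℕ) (DL : ℕ → KPoly → KPoly) : Prop :=
  ∀ i, 1 ≤ i → i < n → ∀ f : KPoly,
    (MvPolynomial.X i - MvPolynomial.X (i + 1)) * DL i f = DLnum i f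

/-- `applyDL DL [i₁,…,iℓ] f = ϖ_{i₁} ϖ_{i₂} ⋯ ϖ_{iℓ} f`. -/
def applyDL (DL : ℕ → KPoly → KPoly) : List ℕ → KPoly → KPoly
  | [], f => f
  | i :: rest, f => DL i (applyDL DL rest f)

/-- A Gelfand–Tsetlin pattern with top row `λ`, as in Statement 10. -/
def IsGT (n : ℕ) (lam : ℕ → ℕ) (L : ℕ → ℕ → ℕ) : Prop :=
  (∀ r, L 0 r = 0) ∧ (∀ r, L n r = lam r) ∧
  (∀ j r, j ≤ n → L j (r + 1) ≤ L j r) ∧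
  (∀ j r, j < n → L j r ≤ L (j + 1) r) ∧
  (∀ j r, j < n → L (j + 1) (r + 1) ≤ L j r) ∧
  (∀ j r, n < j → L j r = 0)

/-- `|λ⁽ʲ⁾|`, the size of the `j`-th partition of the pattern. -/
def gtSize (n : ℕ) (L : ℕ → ℕ → ℕ) (j : ℕ) : ℕ := ∑ r ∈ Finset.range n, L j r

/-- `m_j(Λ) = #{i ≥ 1 : λ⁽ʲ⁾_{i+1} < λ⁽ʲ⁻¹⁾_i}`, the number of markable entries in
row `j`. -/
def mjCount (n : ℕ) (L : ℕ → ℕ → ℕ) (j : ℕ) : ℕ :=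
  ((Finset.Icc 1 n).filter fun i => L j i < L (j - 1) (i - 1)).card

/-! ### Auxiliary development -/

section Tokuyama

variable (n : ℕ) (lam : ℕ → ℕ)

/-- number of boxes in row `r` of `t` whose minimum entry is at most `j`. -/
def rowCount (t : Filling) (j r : ℕ) : ℕ :=
  ((Finset.range (lam r)).filter (fun c => ∃ a ∈ t r c, a ≤ j)).card

/-- the GT pattern associated to a set-valued tableau. -/
def Lmap (t : Filling) : ℕ → ℕ → ℕ := fun j r => if j ≤ n then rowCount lam t j r else 0

/-- row `r` (0-indexed) contains an "extra" copy of `j`. -/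
def HasExtra (t : Filling) (L : ℕ → ℕ → ℕ) (j r : ℕ) : Prop :=
  0 < L (j - 1) r ∧ j ∈ t r (L (j - 1) r - 1)

/-- the marked (1-indexed) rows of `t` at step `j`. -/
def marksF (t : Filling) (L : ℕ → ℕ → ℕ) (j : ℕ) : Finset ℕ :=
  (Finset.Icc 1 n).filter (fun i => HasExtra t L j (i - 1))

/-- the markable (1-indexed) rows of a GT pattern at step `j`. -/
def markFinset (L : ℕ → ℕ → ℕ) (j : ℕ) : Finset ℕ :=
  (Finset.Icc 1 n).filter (fun i => L j i < L (j - 1) (i - 1))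

/-- the tableau built from a GT pattern `L` and a marking `M`. -/
def tabOf (L : ℕ → ℕ → ℕ) (M : ℕ → Finset ℕ) : Filling :=
  fun r c => if c < lam r then
    (Finset.Icc 1 n).filter
      (fun j => (L (j - 1) r ≤ c ∧ c < L j r) ∨ (r + 1 ∈ M j ∧ c + 1 = L (j - 1) r))
  else ∅

variable {n lam}

lemma lam_anti (hlam : IsPartitionShape n lam) : ∀ {r r'}, r ≤ r' → lam r' ≤ lam r := by
  intro r r' h
  induction r' with
  | zero =>
    have : r = 0 := by omega
    subst this; rfl
  | succ k ih =>
    rcases Nat.lt_or_ge r (k+1) with h'|h'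
    · exact le_trans (hlam.1 k) (ih (by omega))
    · have : r = k + 1 := by omega
      subst this; rfl

variable {t : Filling}

lemma row_min_mono (hst : IsSVT n lam t) {r c c' j : ℕ} (hcc : c' ≤ c) (hc : c < lam r)
    (hex : ∃ a ∈ t r c, a ≤ j) : ∃ a ∈ t r c', a ≤ j := by
  have key : ∀ k, c' + k < lam r → (∃ a ∈ t r (c' + k), a ≤ j) → ∃ a ∈ t r c', a ≤ j := by
    intro k
    induction k with
    | zero => intro _ h; simpa using h
    | succ k ih =>
      intro hk ⟨a, ha, haj⟩
      obtain ⟨b, hb⟩ := hst.boxNonempty r (c' + k) (by omega)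
      exact ih (by omega) ⟨b, hb, le_trans (hst.rowWeak r (c' + k) b a hb ha) haj⟩
  have : c = c' + (c - c') := by omega
  exact key (c - c') (by omega) (by rwa [← this])

lemma lt_rowCount_iff (hst : IsSVT n lam t) {j r c : ℕ} :
    c < rowCount lam t j r ↔ c < lam r ∧ ∃ a ∈ t r c, a ≤ j := by
  constructor
  · intro h
    have hle : rowCount lam t j r ≤ lam r := by
      simpa [rowCount] using Finset.card_filter_le (Finset.range (lam r)) _
    have hc : c < lam r := lt_of_lt_of_le h hle
    refine ⟨hc, ?_⟩
    by_contra hno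
    have hsub : (Finset.range (lam r)).filter (fun c => ∃ a ∈ t r c, a ≤ j) ⊆
        Finset.range c := by
      intro x hx
      simp only [Finset.mem_filter, Finset.mem_range] at hx ⊢
      by_contra hxc
      exact hno (row_min_mono hst (by omega) hx.1 hx.2)
    have := Finset.card_le_card hsub
    simp only [Finset.card_range] at this
    unfold rowCount at h; omega
  · rintro ⟨hc, hex⟩
    have hsub : Finset.range (c + 1) ⊆
        (Finset.range (lam r)).filter (fun c => ∃ a ∈ t r c, a ≤ j) := by
      intro x hx
      simp only [Finset.mem_range] at hx
      simp only [Finset.mem_filter, Finset.mem_range]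
      exact ⟨by omega, row_min_mono hst (by omega) hc hex⟩
    have := Finset.card_le_card hsub
    simp only [Finset.card_range] at this
    unfold rowCount; omega

lemma lt_Lmap_iff (hst : IsSVT n lam t) {j r c : ℕ} (hj : j ≤ n) :
    c < Lmap n lam t j r ↔ c < lam r ∧ ∃ a ∈ t r c, a ≤ j := by
  rw [Lmap]; simp only [if_pos hj]; exact lt_rowCount_iff hst

lemma Lmap_le_lam {j r : ℕ} : Lmap n lam t j r ≤ lam r := by
  rw [Lmap]; split
  · simpa [rowCount] using Finset.card_filter_le (Finset.range (lam r)) _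
  · omega

lemma le_helper {A B : ℕ} (h : ∀ c, c < A → c < B) : A ≤ B := by
  by_contra hc
  push_neg at hc
  exact absurd (h B hc) (lt_irrefl B)

lemma Lmap_mono_j {j j' r : ℕ} (h : j ≤ j') (h' : j' ≤ n) :
    Lmap n lam t j r ≤ Lmap n lam t j' r := by
  rw [Lmap, Lmap, if_pos h', if_pos (le_trans h h')]
  apply Finset.card_le_card
  intro x hx
  simp only [Finset.mem_filter] at hx ⊢
  exact ⟨hx.1, hx.2.imp fun a ⟨ha, haj⟩ => ⟨ha, le_trans haj h⟩⟩

lemma isGT_Lmap (hst : IsSVT n lam t) (hlam : IsPartitionShape n lam) :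
    IsGT n lam (Lmap n lam t) := by
  refine ⟨?_, ?_, ?_, ?_, ?_, ?_⟩
  · intro r
    have : ¬ 0 < Lmap n lam t 0 r := by
      rw [lt_Lmap_iff hst (Nat.zero_le n)]
      rintro ⟨_, a, ha, ha0⟩
      have := hst.entryBounds r 0 a ha; omega
    omega
  · intro r
    rw [Lmap, if_pos le_rfl, rowCount]
    rw [Finset.filter_true_of_mem, Finset.card_range]
    intro c hc
    simp only [Finset.mem_range] at hc
    obtain ⟨a, ha⟩ := hst.boxNonempty r c hc
    exact ⟨a, ha, (hst.entryBounds r c a ha).2⟩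
  · intro j r hj
    apply le_helper
    intro c hc
    rw [lt_Lmap_iff hst hj] at hc ⊢
    obtain ⟨hc1, a, ha, haj⟩ := hc
    have hcr : c < lam r := lt_of_lt_of_le hc1 (hlam.1 r)
    obtain ⟨b, hb⟩ := hst.boxNonempty r c hcr
    exact ⟨hcr, b, hb, le_trans (le_of_lt (hst.colStrict r c b a hb ha)) haj⟩
  · intro j r hj
    exact Lmap_mono_j (Nat.le_succ j) hj
  · intro j r hj
    apply le_helper
    intro c hc
    rw [lt_Lmap_iff hst hj] at hc
    rw [lt_Lmap_iff hst (by omega)]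
    obtain ⟨hc1, a, ha, haj⟩ := hc
    have hcr : c < lam r := lt_of_lt_of_le hc1 (hlam.1 r)
    obtain ⟨b, hb⟩ := hst.boxNonempty r c hcr
    have := hst.colStrict r c b a hb ha
    exact ⟨hcr, b, hb, by omega⟩
  · intro j r hj
    rw [Lmap, if_neg (by omega)]

lemma mem_box_cases (hst : IsSVT n lam t) {j r c : ℕ} (hj1 : 1 ≤ j) (hjn : j ≤ n)
    (hmem : j ∈ t r c) :
    (Lmap n lam t (j - 1) r ≤ c ∧ c < Lmap n lam t j r) ∨ c + 1 = Lmap n lam t (j - 1) r := by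
  have hc : c < lam r := by
    by_contra h
    rw [hst.emptyOutside r c h] at hmem
    simp at hmem
  have hcj : c < Lmap n lam t j r := (lt_Lmap_iff hst hjn).2 ⟨hc, j, hmem, le_rfl⟩
  by_cases hle : Lmap n lam t (j - 1) r ≤ c
  · exact Or.inl ⟨hle, hcj⟩
  · push_neg at hle
    right
    by_contra hne
    have h2 : c + 1 < Lmap n lam t (j - 1) r := by omega
    obtain ⟨_, a, ha, haj⟩ := (lt_Lmap_iff hst (by omega)).1 h2
    have := hst.rowWeak r c j a hmem ha
    omega

lemma strip_mem (hst : IsSVT n lam t) {j r c : ℕ} (hjn : j ≤ n)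
    (h1 : Lmap n lam t (j - 1) r ≤ c) (h2 : c < Lmap n lam t j r) : j ∈ t r c := by
  obtain ⟨hc, a, ha, haj⟩ := (lt_Lmap_iff hst hjn).1 h2
  have : ¬ a ≤ j - 1 := by
    intro hle
    have : c < Lmap n lam t (j - 1) r := (lt_Lmap_iff hst (by omega)).2 ⟨hc, a, ha, hle⟩
    omega
  have : a = j := by omega
  rwa [← this]

lemma rowFilter_card (hst : IsSVT n lam t) (hlam : IsPartitionShape n lam) {j r : ℕ}
    (hj1 : 1 ≤ j) (hjn : j ≤ n) :
    ((Finset.range (lam 0)).filter (fun c => j ∈ t r c)).card =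
      (Lmap n lam t j r - Lmap n lam t (j - 1) r) +
        (if HasExtra t (Lmap n lam t) j r then 1 else 0) := by
  have hlam0 : lam r ≤ lam 0 := lam_anti hlam (Nat.zero_le r)
  have hLj : Lmap n lam t j r ≤ lam r := Lmap_le_lam
  have hLj1 : Lmap n lam t (j - 1) r ≤ lam r := Lmap_le_lam
  have hset : (Finset.range (lam 0)).filter (fun c => j ∈ t r c) =
      Finset.Ico (Lmap n lam t (j - 1) r) (Lmap n lam t j r) ∪
        (if HasExtra t (Lmap n lam t) j r then {Lmap n lam t (j - 1) r - 1} else ∅) := by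
    ext c
    simp only [Finset.mem_filter, Finset.mem_range, Finset.mem_union, Finset.mem_Ico]
    by_cases hE : HasExtra t (Lmap n lam t) j r
    · simp only [if_pos hE, Finset.mem_singleton]
      obtain ⟨hpos, hmemE⟩ := hE
      constructor
      · rintro ⟨hc0, hmem⟩
        rcases mem_box_cases hst hj1 hjn hmem with h|h
        · exact Or.inl h
        · exact Or.inr (by omega)
      · rintro (⟨h1, h2⟩ | h)
        · exact ⟨by omega, strip_mem hst hjn h1 h2⟩
        · subst h
          exact ⟨by omega, hmemE⟩
    · simp only [if_neg hE, Finset.notMem_empty, or_false]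
      constructor
      · rintro ⟨hc0, hmem⟩
        rcases mem_box_cases hst hj1 hjn hmem with h|h
        · exact h
        · exfalso
          apply hE
          refine ⟨by omega, ?_⟩
          have : Lmap n lam t (j - 1) r - 1 = c := by omega
          rwa [this]
      · rintro ⟨h1, h2⟩
        exact ⟨by omega, strip_mem hst hjn h1 h2⟩
  rw [hset, Finset.card_union_of_disjoint, Nat.card_Ico]
  · congr 1
    split <;> simp
  · rw [Finset.disjoint_left]
    intro a ha ha'
    simp only [Finset.mem_Ico] at ha
    split at ha' <;> simp_all only [Finset.mem_singleton, Finset.notMem_empty]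
    · rename_i hE
      obtain ⟨hpos, -⟩ := hE
      omega

lemma sum_tsub_nat {s : Finset ℕ} {f g : ℕ → ℕ} (h : ∀ x ∈ s, g x ≤ f x) :
    ∑ x ∈ s, (f x - g x) = ∑ x ∈ s, f x - ∑ x ∈ s, g x := by
  have key : ∑ x ∈ s, (f x - g x) + ∑ x ∈ s, g x = ∑ x ∈ s, f x := by
    rw [← Finset.sum_add_distrib]
    exact Finset.sum_congr rfl fun x hx => by have := h x hx; omega
  omega

lemma wt_eq_sum (j : ℕ) :
    wt n lam t j = ∑ r ∈ Finset.range n, ((Finset.range (lam 0)).filter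
      (fun c => j ∈ t r c)).card := by
  rw [wt, Finset.card_filter, Finset.sum_product]
  exact Finset.sum_congr rfl fun r _ => (Finset.card_filter _ _).symm

lemma marksF_card_eq (L : ℕ → ℕ → ℕ) (j : ℕ) :
    (marksF n t L j).card = ((Finset.range n).filter (fun r => HasExtra t L j r)).card := by
  have himg : marksF n t L j =
      ((Finset.range n).filter (fun r => HasExtra t L j r)).image (· + 1) := by
    ext i
    simp only [marksF, Finset.mem_filter, Finset.mem_Icc, Finset.mem_image, Finset.mem_range]
    constructor
    · rintro ⟨⟨h1, h2⟩, hE⟩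
      exact ⟨i - 1, ⟨by omega, hE⟩, by omega⟩
    · rintro ⟨r, ⟨hr, hE⟩, rfl⟩
      refine ⟨⟨by omega, by omega⟩, ?_⟩
      simpa using hE
  rw [himg, Finset.card_image_of_injective _ (fun a b => by omega)]

lemma wt_formula (hst : IsSVT n lam t) (hlam : IsPartitionShape n lam) {j : ℕ}
    (hj1 : 1 ≤ j) (hjn : j ≤ n) :
    wt n lam t j = (gtSize n (Lmap n lam t) j - gtSize n (Lmap n lam t) (j - 1)) +
      (marksF n t (Lmap n lam t) j).card := by
  rw [wt_eq_sum]
  have : ∀ r ∈ Finset.range n,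
      ((Finset.range (lam 0)).filter (fun c => j ∈ t r c)).card =
      (Lmap n lam t j r - Lmap n lam t (j - 1) r) +
        (if HasExtra t (Lmap n lam t) j r then 1 else 0) :=
    fun r _ => rowFilter_card hst hlam hj1 hjn
  rw [Finset.sum_congr rfl this, Finset.sum_add_distrib]
  congr 1
  · rw [gtSize, gtSize, ← sum_tsub_nat]
    intro r _
    exact Lmap_mono_j (by omega) hjn
  · rw [marksF_card_eq, Finset.card_filter]

lemma marksF_subset (hst : IsSVT n lam t) {j : ℕ} :
    marksF n t (Lmap n lam t) j ⊆ markFinset n (Lmap n lam t) j := by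
  intro i hi
  simp only [marksF, Finset.mem_filter, Finset.mem_Icc] at hi
  obtain ⟨⟨h1, h2⟩, hpos, hmem⟩ := hi
  simp only [markFinset, Finset.mem_filter, Finset.mem_Icc]
  refine ⟨⟨h1, h2⟩, ?_⟩
  obtain ⟨hja, hjb⟩ := hst.entryBounds _ _ _ hmem
  have key : Lmap n lam t j (i - 1 + 1) ≤ Lmap n lam t (j - 1) (i - 1) - 1 := by
    by_contra hcon
    push_neg at hcon
    have : Lmap n lam t (j - 1) (i - 1) - 1 < Lmap n lam t j (i - 1 + 1) := hcon
    obtain ⟨_, a, ha, haj⟩ := (lt_Lmap_iff hst hjb).1 this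
    have := hst.colStrict (i - 1) _ j a hmem ha
    omega
  have hi1 : i - 1 + 1 = i := by omega
  rw [hi1] at key
  omega

lemma telescope_nat {m : ℕ} {f : ℕ → ℕ} (h0 : f 0 = 0) (hm : ∀ i, i < m → f i ≤ f (i + 1)) :
    ∑ i ∈ Finset.range m, (f (i + 1) - f i) = f m := by
  induction m with
  | zero => simpa using h0.symm
  | succ m ih =>
    rw [Finset.sum_range_succ, ih (fun i hi => hm i (by omega))]
    have := hm m (by omega)
    omega

lemma sum_Icc_shift {M : Type*} [AddCommMonoid M] (g : ℕ → M) :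
    ∑ j ∈ Finset.Icc 1 n, g j = ∑ i ∈ Finset.range n, g (i + 1) := by
  apply Finset.sum_nbij' (i := fun j => j - 1) (j := fun i => i + 1)
  · intro a ha; simp only [Finset.mem_Icc] at ha; simp only [Finset.mem_range]; omega
  · intro a ha; simp only [Finset.mem_range] at ha; simp only [Finset.mem_Icc]; omega
  · intro a ha; simp only [Finset.mem_Icc] at ha; omega
  · intro a _; omega
  · intro a ha; simp only [Finset.mem_Icc] at ha; congr 1; omega

lemma excess_eq (hst : IsSVT n lam t) (hlam : IsPartitionShape n lam) :
    excess n lam t = ∑ j ∈ Finset.Icc 1 n, (marksF n t (Lmap n lam t) j).card := by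
  have hboxsub : ∀ r c, t r c ⊆ Finset.Icc 1 n := by
    intro r c x hx
    simp only [Finset.mem_Icc]
    exact hst.entryBounds r c x hx
  -- A = total number of entries
  have hA1 : ∑ p ∈ Finset.range n ×ˢ Finset.range (lam 0), (t p.1 p.2).card =
      excess n lam t + ∑ p ∈ Finset.range n ×ˢ Finset.range (lam 0),
        (if p.2 < lam p.1 then 1 else 0) := by
    rw [excess, ← Finset.sum_add_distrib]
    apply Finset.sum_congr rfl
    rintro ⟨r, c⟩ _
    simp only
    by_cases hc : c < lam r
    · have := Finset.card_pos.2 (hst.boxNonempty r c hc)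
      rw [if_pos hc]; omega
    · rw [hst.emptyOutside r c hc, if_neg hc]
      simp
  have hS : ∑ p ∈ Finset.range n ×ˢ Finset.range (lam 0),
      (if p.2 < lam p.1 then 1 else 0) = ∑ r ∈ Finset.range n, lam r := by
    rw [Finset.sum_product]
    apply Finset.sum_congr rfl
    intro r hr
    have hlam0 : lam r ≤ lam 0 := lam_anti hlam (Nat.zero_le r)
    rw [← Finset.card_filter]
    have : (Finset.range (lam 0)).filter (fun c => c < lam r) = Finset.range (lam r) := by
      ext c
      simp only [Finset.mem_filter, Finset.mem_range]
      omega
    rw [this, Finset.card_range]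
  have hA2 : ∑ p ∈ Finset.range n ×ˢ Finset.range (lam 0), (t p.1 p.2).card =
      ∑ j ∈ Finset.Icc 1 n, wt n lam t j := by
    have hcard : ∀ p : ℕ × ℕ, (t p.1 p.2).card =
        ∑ j ∈ Finset.Icc 1 n, (if j ∈ t p.1 p.2 then 1 else 0) := by
      intro p
      rw [← Finset.card_filter]
      congr 1
      ext x
      simp only [Finset.mem_filter, Finset.mem_Icc]
      exact ⟨fun hx => ⟨by simpa using hboxsub _ _ hx, hx⟩, fun h => h.2⟩
    rw [Finset.sum_congr rfl fun p _ => hcard p, Finset.sum_comm]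
    apply Finset.sum_congr rfl
    intro j _
    rw [wt, Finset.card_filter]
  -- weights formula summed
  have hW : ∑ j ∈ Finset.Icc 1 n, wt n lam t j =
      (∑ r ∈ Finset.range n, lam r) +
        ∑ j ∈ Finset.Icc 1 n, (marksF n t (Lmap n lam t) j).card := by
    have hw : ∀ j ∈ Finset.Icc 1 n, wt n lam t j =
        (gtSize n (Lmap n lam t) j - gtSize n (Lmap n lam t) (j - 1)) +
          (marksF n t (Lmap n lam t) j).card := by
      intro j hj
      simp only [Finset.mem_Icc] at hj
      exact wt_formula hst hlam hj.1 hj.2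
    rw [Finset.sum_congr rfl hw, Finset.sum_add_distrib]
    congr 1
    rw [sum_Icc_shift]
    have hgt := isGT_Lmap hst hlam
    have htel : ∑ i ∈ Finset.range n,
        (gtSize n (Lmap n lam t) (i + 1) - gtSize n (Lmap n lam t) i) =
        gtSize n (Lmap n lam t) n := by
      apply telescope_nat
      · rw [gtSize]
        apply Finset.sum_eq_zero
        intro r _
        exact hgt.1 r
      · intro i hi
        exact Finset.sum_le_sum fun r _ => hgt.2.2.2.1 i r hi
    have hsimp : ∀ i : ℕ, i + 1 - 1 = i := fun i => by omega
    simp only [hsimp]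
    rw [htel, gtSize]
    exact Finset.sum_congr rfl fun r _ => hgt.2.1 r
  omega

section GTside

variable {L : ℕ → ℕ → ℕ} {M : ℕ → Finset ℕ}

lemma IsGT.monoj (hL : IsGT n lam L) {j j' r : ℕ} (h : j ≤ j') (h' : j' ≤ n) :
    L j r ≤ L j' r := by
  have key : ∀ k, j + k ≤ n → L j r ≤ L (j + k) r := by
    intro k
    induction k with
    | zero => intro _; rfl
    | succ k ih =>
      intro hk
      calc L j r ≤ L (j + k) r := ih (by omega)
        _ ≤ L (j + k + 1) r := hL.2.2.2.1 (j + k) r (by omega)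
  have : j' = j + (j' - j) := by omega
  rw [this]
  exact key _ (by omega)

lemma IsGT.le_lam (hL : IsGT n lam L) {j r : ℕ} (h : j ≤ n) : L j r ≤ lam r := by
  have := hL.monoj h le_rfl (r := r)
  rwa [hL.2.1 r] at this

lemma mem_tabOf {a r c : ℕ} :
    a ∈ tabOf n lam L M r c ↔ c < lam r ∧ (1 ≤ a ∧ a ≤ n) ∧
      ((L (a - 1) r ≤ c ∧ c < L a r) ∨ (r + 1 ∈ M a ∧ c + 1 = L (a - 1) r)) := by
  by_cases h : c < lam r <;>
    simp [tabOf, h, Finset.mem_filter, Finset.mem_Icc, and_assoc]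

lemma exists_strip (hL : IsGT n lam L) {j r c : ℕ} (hj : j ≤ n) (hc : c < L j r) :
    ∃ a, 1 ≤ a ∧ a ≤ j ∧ L (a - 1) r ≤ c ∧ c < L a r := by
  have hex : ∃ a, c < L a r := ⟨j, hc⟩
  let a := Nat.find hex
  have ha : c < L a r := Nat.find_spec hex
  have haj : a ≤ j := Nat.find_min' hex hc
  have ha1 : 1 ≤ a := by
    rcases Nat.eq_zero_or_pos a with h|h
    · exfalso
      have := hL.1 r
      rw [h] at ha
      omega
    · exact h
  have hprev : ¬ c < L (a - 1) r := Nat.find_min hex (by omega)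
  exact ⟨a, ha1, haj, by omega, ha⟩

lemma isSVT_tabOf (hL : IsGT n lam L) (hlam : IsPartitionShape n lam)
    (hM : ∀ j, M j ⊆ markFinset n L j) : IsSVT n lam (tabOf n lam L M) := by
  have hmark : ∀ {j i : ℕ}, i ∈ M j → 1 ≤ i ∧ i ≤ n ∧ L j i < L (j - 1) (i - 1) := by
    intro j i hi
    have := hM j hi
    simp only [markFinset, Finset.mem_filter, Finset.mem_Icc] at this
    exact ⟨this.1.1, this.1.2, this.2⟩
  constructor
  · intro r c hc
    obtain ⟨a, ha1, han, hstrip⟩ := exists_strip hL le_rfl (by rwa [hL.2.1 r])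
    exact ⟨a, mem_tabOf.2 ⟨hc, ⟨ha1, han⟩, Or.inl hstrip⟩⟩
  · intro r c hc
    simp [tabOf, hc]
  · intro r c a ha
    exact (mem_tabOf.1 ha).2.1
  · intro r c a b ha hb
    rw [mem_tabOf] at ha hb
    obtain ⟨-, ⟨ha1, han⟩, hda⟩ := ha
    obtain ⟨-, ⟨hb1, hbn⟩, hdb⟩ := hb
    by_contra hcon
    push_neg at hcon
    have h1 : L (b - 1) r ≤ L (a - 1) r := hL.monoj (by omega) (by omega)
    have h2 : L b r ≤ L (a - 1) r := hL.monoj (by omega) (by omega)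
    rcases hda with ⟨hda1, hda2⟩|⟨-, hda2⟩ <;> rcases hdb with ⟨hdb1, hdb2⟩|⟨-, hdb2⟩ <;> omega
  · intro r c a b ha hb
    rw [mem_tabOf] at ha hb
    obtain ⟨hcr, ⟨ha1, han⟩, hda⟩ := ha
    obtain ⟨hcr1, ⟨hb1, hbn⟩, hdb⟩ := hb
    by_contra hcon
    push_neg at hcon
    have hba : L b (r + 1) ≤ L a (r + 1) := hL.monoj hcon han
    have hcb : c < L b (r + 1) := by
      rcases hdb with ⟨-, h⟩|⟨-, h⟩
      · exact h
      · have := hL.monoj (Nat.sub_le b 1) hbn (r := r + 1)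
        omega
    rcases hda with ⟨hda1, -⟩|⟨hmem, hda2⟩
    · have hs : L (a - 1 + 1) (r + 1) ≤ L (a - 1) r := hL.2.2.2.2.1 (a - 1) r (by omega)
      have : a - 1 + 1 = a := by omega
      rw [this] at hs
      omega
    · obtain ⟨-, -, hlt⟩ := hmark hmem
      have : r + 1 - 1 = r := by omega
      rw [this] at hlt
      omega

lemma Lmap_tabOf (hL : IsGT n lam L) (hlam : IsPartitionShape n lam)
    (hM : ∀ j, M j ⊆ markFinset n L j) : Lmap n lam (tabOf n lam L M) = L := by
  funext j r
  by_cases hj : j ≤ n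
  · rw [Lmap]
    simp only [if_pos hj]
    rw [rowCount]
    have hfil : (Finset.range (lam r)).filter
        (fun c => ∃ a ∈ tabOf n lam L M r c, a ≤ j) = Finset.range (L j r) := by
      ext c
      simp only [Finset.mem_filter, Finset.mem_range]
      constructor
      · rintro ⟨hc, a, ha, haj⟩
        rw [mem_tabOf] at ha
        obtain ⟨-, ⟨ha1, han⟩, hd⟩ := ha
        rcases hd with ⟨-, h⟩|⟨-, h⟩
        · exact lt_of_lt_of_le h (hL.monoj (by omega) hj)
        · have := hL.monoj (show a - 1 ≤ j by omega) hj (r := r)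
          omega
      · intro hcL
        have hc : c < lam r := lt_of_lt_of_le hcL (hL.le_lam hj)
        obtain ⟨a, ha1, haj, hs1, hs2⟩ := exists_strip hL hj hcL
        exact ⟨hc, a, mem_tabOf.2 ⟨hc, ⟨ha1, by omega⟩, Or.inl ⟨hs1, hs2⟩⟩, haj⟩
    rw [hfil, Finset.card_range]
  · rw [Lmap, if_neg hj, hL.2.2.2.2.2 j r (by omega)]

lemma marksF_tabOf (hL : IsGT n lam L) (hlam : IsPartitionShape n lam)
    (hM : ∀ j, M j ⊆ markFinset n L j) {j : ℕ} (hj1 : 1 ≤ j) (hjn : j ≤ n) :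
    marksF n (tabOf n lam L M) L j = M j := by
  ext i
  simp only [marksF, Finset.mem_filter, Finset.mem_Icc]
  simp only [HasExtra]
  constructor
  · rintro ⟨⟨h1, h2⟩, hpos, hmem⟩
    rw [mem_tabOf] at hmem
    obtain ⟨-, -, hd⟩ := hmem
    rcases hd with ⟨hs1, -⟩|⟨hmem', -⟩
    · omega
    · have : i - 1 + 1 = i := by omega
      rwa [this] at hmem'
  · intro hi
    have hMi := hM j hi
    simp only [markFinset, Finset.mem_filter, Finset.mem_Icc] at hMi
    obtain ⟨⟨h1, h2⟩, hlt⟩ := hMi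
    refine ⟨⟨h1, h2⟩, by omega, ?_⟩
    rw [mem_tabOf]
    have hlelam : L (j - 1) (i - 1) ≤ lam (i - 1) := hL.le_lam (by omega)
    refine ⟨by omega, ⟨hj1, hjn⟩, Or.inr ⟨?_, by omega⟩⟩
    have : i - 1 + 1 = i := by omega
    rwa [this]

lemma tabOf_inv (hst : IsSVT n lam t) (hlam : IsPartitionShape n lam)
    (hMa : ∀ j ∈ Finset.Icc 1 n, M j = marksF n t (Lmap n lam t) j) :
    tabOf n lam (Lmap n lam t) M = t := by
  funext r c
  by_cases hc : c < lam r
  · ext x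
    rw [mem_tabOf]
    constructor
    · rintro ⟨-, ⟨hx1, hxn⟩, hd⟩
      rcases hd with ⟨h1, h2⟩|⟨hmark, hceq⟩
      · exact strip_mem hst hxn h1 h2
      · rw [hMa x (Finset.mem_Icc.2 ⟨hx1, hxn⟩)] at hmark
        simp only [marksF, Finset.mem_filter, Finset.mem_Icc] at hmark
        simp only [HasExtra] at hmark
        obtain ⟨-, -, hmem⟩ := hmark
        have he1 : r + 1 - 1 = r := by omega
        rw [he1] at hmem
        have he2 : Lmap n lam t (x - 1) r - 1 = c := by omega
        rwa [he2] at hmem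
    · intro hx
      obtain ⟨hx1, hxn⟩ := hst.entryBounds r c x hx
      refine ⟨hc, ⟨hx1, hxn⟩, ?_⟩
      rcases mem_box_cases hst hx1 hxn hx with h|hceq
      · exact Or.inl h
      · refine Or.inr ⟨?_, hceq⟩
        rw [hMa x (Finset.mem_Icc.2 ⟨hx1, hxn⟩)]
        simp only [marksF, Finset.mem_filter, Finset.mem_Icc]
        simp only [HasExtra]
        have hrn : r < n := by
          by_contra hr
          have := hlam.2 r (by omega)
          omega
        have he1 : r + 1 - 1 = r := by omega
        rw [he1]
        refine ⟨⟨by omega, by omega⟩, by omega, ?_⟩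
        have he2 : Lmap n lam t (x - 1) r - 1 = c := by omega
        rwa [he2]
  · rw [hst.emptyOutside r c hc, tabOf, if_neg hc]

end GTside

variable (n lam)

def rectT : Finset (ℕ × ℕ) := Finset.range n ×ˢ Finset.range (lam 0)

def svtFinset : Finset Filling :=
  (((rectT n lam).pi (fun _ => (Finset.Icc 1 n).powerset)).image
    (fun p r c => if h : (r, c) ∈ rectT n lam then p (r, c) h else ∅)).filter
    (fun t => IsSVT n lam t)

def rectG : Finset (ℕ × ℕ) := Finset.range (n + 1) ×ˢ Finset.range n

def gtFinset : Finset (ℕ → ℕ → ℕ) :=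
  (((rectG n).pi (fun _ => Finset.range (lam 0 + 1))).image
    (fun p j r => if h : (j, r) ∈ rectG n then p (j, r) h else 0)).filter
    (fun L => IsGT n lam L)

variable {n lam}

lemma mem_svtFinset (hlam : IsPartitionShape n lam) {t : Filling} :
    t ∈ svtFinset n lam ↔ IsSVT n lam t := by
  rw [svtFinset, Finset.mem_filter]
  constructor
  · exact fun h => h.2
  · intro hst
    refine ⟨Finset.mem_image.2 ⟨fun q _ => t q.1 q.2, ?_, ?_⟩, hst⟩
    · rw [Finset.mem_pi]
      intro q _
      rw [Finset.mem_powerset]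
      intro x hx
      simp only [Finset.mem_Icc]
      exact hst.entryBounds q.1 q.2 x hx
    · funext r c
      by_cases h : (r, c) ∈ rectT n lam
      · simp only [dif_pos h]
      · simp only [dif_neg h]
        simp only [rectT, Finset.mem_product, Finset.mem_range, not_and_or, not_lt] at h
        refine (hst.emptyOutside r c ?_).symm
        rcases h with h|h
        · have := hlam.2 r h; omega
        · have := lam_anti hlam (Nat.zero_le r); omega

lemma mem_gtFinset (hlam : IsPartitionShape n lam) {L : ℕ → ℕ → ℕ} :
    L ∈ gtFinset n lam ↔ IsGT n lam L := by
  rw [gtFinset, Finset.mem_filter]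
  constructor
  · exact fun h => h.2
  · intro hL
    refine ⟨Finset.mem_image.2 ⟨fun q _ => L q.1 q.2, ?_, ?_⟩, hL⟩
    · rw [Finset.mem_pi]
      rintro ⟨j, r⟩ hq
      simp only [rectG, Finset.mem_product, Finset.mem_range] at hq
      simp only [Finset.mem_range]
      have h1 : L j r ≤ lam r := hL.le_lam (by omega)
      have h2 : lam r ≤ lam 0 := lam_anti hlam (Nat.zero_le r)
      omega
    · funext j r
      by_cases h : (j, r) ∈ rectG n
      · simp only [dif_pos h]
      · simp only [dif_neg h]
        simp only [rectG, Finset.mem_product, Finset.mem_range, not_and_or, not_lt] at h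
        rcases h with h|h
        · exact (hL.2.2.2.2.2 j r (by omega)).symm
        · rcases le_or_gt j n with hj|hj
          · have h1 : L j r ≤ lam r := hL.le_lam hj
            have h2 : lam r = 0 := hlam.2 r h
            omega
          · exact (hL.2.2.2.2.2 j r hj).symm

lemma sum_powerset_pow {R : Type*} [CommSemiring R] (s : Finset ℕ) (y : R) :
    ∑ A ∈ s.powerset, y ^ A.card = (1 + y) ^ s.card := by
  calc ∑ A ∈ s.powerset, y ^ A.card
      = ∑ A ∈ s.powerset, (∏ _i ∈ A, y) * ∏ _i ∈ s \ A, (1 : R) := by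
        apply Finset.sum_congr rfl
        intro A _
        simp [Finset.prod_const]
    _ = ∏ _i ∈ s, (y + 1) := (Finset.prod_add _ _ s).symm
    _ = (1 + y) ^ s.card := by rw [Finset.prod_const, add_comm]

lemma fiber_marks_sum (hlam : IsPartitionShape n lam) {L : ℕ → ℕ → ℕ} (hL : IsGT n lam L) :
    ∑ t ∈ (svtFinset n lam).filter (fun t => Lmap n lam t = L),
      ∏ j ∈ Finset.Icc 1 n, (betaP * MvPolynomial.X j : KPoly) ^ (marksF n t L j).card
    = ∏ j ∈ Finset.Icc 1 n,
        ∑ A ∈ (markFinset n L j).powerset, (betaP * MvPolynomial.X j : KPoly) ^ A.card := by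
  rw [Finset.prod_sum]
  apply Finset.sum_nbij' (i := fun t => fun j _ => marksF n t L j)
    (j := fun p => tabOf n lam L (fun j => if h : j ∈ Finset.Icc 1 n then p j h else ∅))
  · -- maps to pi
    intro t ht
    rw [Finset.mem_filter] at ht
    obtain ⟨hsv, hLt⟩ := ht
    have hst := (mem_svtFinset hlam).1 hsv
    rw [Finset.mem_pi]
    intro j _
    rw [Finset.mem_powerset, ← hLt]
    exact marksF_subset hst
  · -- maps back to fiber
    intro p hp
    rw [Finset.mem_pi] at hp
    have hM : ∀ j, (fun j => if h : j ∈ Finset.Icc 1 n then p j h else ∅) j ⊆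
        markFinset n L j := by
      intro j
      by_cases h : j ∈ Finset.Icc 1 n
      · simp only [dif_pos h]
        exact Finset.mem_powerset.1 (hp j h)
      · simp only [dif_neg h]
        exact Finset.empty_subset _
    rw [Finset.mem_filter]
    exact ⟨(mem_svtFinset hlam).2 (isSVT_tabOf hL hlam hM), Lmap_tabOf hL hlam hM⟩
  · -- left inverse
    intro t ht
    rw [Finset.mem_filter] at ht
    obtain ⟨hsv, hLt⟩ := ht
    have hst := (mem_svtFinset hlam).1 hsv
    subst hLt
    apply tabOf_inv hst hlam
    intro j hj
    simp only [dif_pos hj]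
  · -- right inverse
    intro p hp
    rw [Finset.mem_pi] at hp
    have hM : ∀ j, (fun j => if h : j ∈ Finset.Icc 1 n then p j h else ∅) j ⊆
        markFinset n L j := by
      intro j
      by_cases h : j ∈ Finset.Icc 1 n
      · simp only [dif_pos h]
        exact Finset.mem_powerset.1 (hp j h)
      · simp only [dif_neg h]
        exact Finset.empty_subset _
    funext j hj
    have hj' := Finset.mem_Icc.1 hj
    rw [marksF_tabOf hL hlam hM hj'.1 hj'.2]
    simp only [dif_pos hj]
  · -- values
    intro t _
    exact (Finset.prod_attach _ fun j =>
      (betaP * MvPolynomial.X j : KPoly) ^ (marksF n t L j).card).symm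

lemma term_factor {t : Filling} {L : ℕ → ℕ → ℕ} (hst : IsSVT n lam t)
    (hlam : IsPartitionShape n lam) (hLt : Lmap n lam t = L) :
    betaP ^ excess n lam t * xwt n lam t =
      (∏ j ∈ Finset.Icc 1 n,
        (MvPolynomial.X j : KPoly) ^ (gtSize n L j - gtSize n L (j - 1))) *
      ∏ j ∈ Finset.Icc 1 n, (betaP * MvPolynomial.X j : KPoly) ^ (marksF n t L j).card := by
  subst hLt
  rw [excess_eq hst hlam, xwt]
  rw [← Finset.prod_pow_eq_pow_sum]
  have hx : ∀ j ∈ Finset.Icc 1 n,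
      (MvPolynomial.X j : KPoly) ^ wt n lam t j =
        (MvPolynomial.X j : KPoly) ^
            (gtSize n (Lmap n lam t) j - gtSize n (Lmap n lam t) (j - 1)) *
          (MvPolynomial.X j : KPoly) ^ (marksF n t (Lmap n lam t) j).card := by
    intro j hj
    obtain ⟨h1, h2⟩ := Finset.mem_Icc.1 hj
    rw [← pow_add, wt_formula hst hlam h1 h2]
  rw [Finset.prod_congr rfl hx, Finset.prod_mul_distrib]
  have hbx : ∀ j ∈ Finset.Icc 1 n,
      (betaP * MvPolynomial.X j : KPoly) ^ (marksF n t (Lmap n lam t) j).card =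
        betaP ^ (marksF n t (Lmap n lam t) j).card *
          (MvPolynomial.X j : KPoly) ^ (marksF n t (Lmap n lam t) j).card :=
    fun j _ => mul_pow _ _ _
  rw [Finset.prod_congr rfl hbx, Finset.prod_mul_distrib]
  ring

lemma fiber_sum (hlam : IsPartitionShape n lam) {L : ℕ → ℕ → ℕ} (hL : IsGT n lam L) :
    ∑ t ∈ (svtFinset n lam).filter (fun t => Lmap n lam t = L),
      betaP ^ excess n lam t * xwt n lam t =
    (∏ j ∈ Finset.Icc 1 n,
      (MvPolynomial.X j : KPoly) ^ (gtSize n L j - gtSize n L (j - 1))) *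
    ∏ j ∈ Finset.Icc 2 n,
      (1 + betaP * MvPolynomial.X j : KPoly) ^ mjCount n L j := by
  have hterm : ∀ t ∈ (svtFinset n lam).filter (fun t => Lmap n lam t = L),
      betaP ^ excess n lam t * xwt n lam t =
        (∏ j ∈ Finset.Icc 1 n,
          (MvPolynomial.X j : KPoly) ^ (gtSize n L j - gtSize n L (j - 1))) *
        ∏ j ∈ Finset.Icc 1 n,
          (betaP * MvPolynomial.X j : KPoly) ^ (marksF n t L j).card := by
    intro t ht
    rw [Finset.mem_filter] at ht
    exact term_factor ((mem_svtFinset hlam).1 ht.1) hlam ht.2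
  rw [Finset.sum_congr rfl hterm, ← Finset.mul_sum, fiber_marks_sum hlam hL]
  congr 1
  have hps : ∀ j ∈ Finset.Icc 1 n,
      ∑ A ∈ (markFinset n L j).powerset, (betaP * MvPolynomial.X j : KPoly) ^ A.card =
        (1 + betaP * MvPolynomial.X j : KPoly) ^ mjCount n L j := by
    intro j _
    rw [sum_powerset_pow]
    rfl
  rw [Finset.prod_congr rfl hps]
  apply (Finset.prod_subset (Finset.Icc_subset_Icc (by omega) le_rfl) ?_).symm
  intro x hx hx2
  have hx1 : x = 1 := by
    have := Finset.mem_Icc.1 hx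
    simp only [Finset.mem_Icc, not_and, not_le] at hx2
    omega
  subst hx1
  have hm : mjCount n L 1 = 0 := by
    rw [mjCount, Finset.card_eq_zero]
    rw [Finset.filter_eq_empty_iff]
    intro i _
    have h0 : L (1 - 1) (i - 1) = 0 := hL.1 (i - 1)
    omega
  rw [hm, pow_zero]

end Tokuyama

/-- the Tokuyama-type formula
`𝔊_λ = ∑_Λ x^{wt Λ} ∏_{j=2}^n (1 + βx_j)^{m_j(Λ)}` over Gelfand–Tsetlin patterns `Λ` with
top row `λ`. -/
theorem groth_GT_tokuyama (n : ℕ) (lam : ℕ → ℕ) (hlam : IsPartitionShape n lam) :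
    Groth n lam =
      ∑ᶠ L ∈ {L : ℕ → ℕ → ℕ | IsGT n lam L},
        (∏ j ∈ Finset.Icc 1 n,
          (MvPolynomial.X j : KPoly) ^ (gtSize n L j - gtSize n L (j - 1))) *
        ∏ j ∈ Finset.Icc 2 n,
          (1 + betaP * MvPolynomial.X j : KPoly) ^ mjCount n L j := by
  rw [Groth, charSet]
  have hset1 : {t | IsSVT n lam t} = ↑(svtFinset n lam) := by
    ext t
    rw [Set.mem_setOf_eq, Finset.mem_coe, mem_svtFinset hlam]
  have hset2 : {L : ℕ → ℕ → ℕ | IsGT n lam L} = ↑(gtFinset n lam) := by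
    ext L
    rw [Set.mem_setOf_eq, Finset.mem_coe, mem_gtFinset hlam]
  rw [hset1, hset2, finsum_mem_coe_finset, finsum_mem_coe_finset]
  have hmaps : ∀ t ∈ svtFinset n lam, Lmap n lam t ∈ gtFinset n lam := by
    intro t ht
    rw [mem_gtFinset hlam]
    exact isGT_Lmap ((mem_svtFinset hlam).1 ht) hlam
  rw [← Finset.sum_fiberwise_of_maps_to hmaps (fun t => betaP ^ excess n lam t * xwt n lam t)]
  exact Finset.sum_congr rfl fun L hL => fiber_sum hlam ((mem_gtFinset hlam).1 hL)


end SVTCrystal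

end
end

section
/- Fix n ≥ 2 and k ≥ 1, and let (k) denote the one-row partition. For every permutation w ∈ S_n and every reduced word (i_1,…,i_ℓ) of w (so w = s_{i_1}⋯s_{i_ℓ} with ℓ the Coxeter length of w), the K-Demazure crystal satisfies SVT^n_{(i_1,…,i_ℓ)}((k)) = { T ∈ SVT^n((k)) : every entry appearing in T is at most w(1) }. In particular, SVT^n_{(i_1,…,i_ℓ)}((k)) depends only on w(1), hence only on the coset w⟨s_2,…,s_{n−1}⟩, and the minimal length representative of this coset is s_{w(1)−1}⋯s_2 s_1. -/
open scoped Classical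

noncomputable section

namespace SVTCrystal

/-! ### Auxiliary lemmas -/

section Aux

theorem Equiv.Perm.apply_inv_self {α : Type*} (f : Equiv.Perm α) (x : α) : f (f⁻¹ x) = x :=
  f.apply_symm_apply x

theorem Equiv.Perm.inv_apply_self {α : Type*} (f : Equiv.Perm α) (x : α) : f⁻¹ (f x) = x :=
  f.symm_apply_apply x

/-! #### Generic facts about `iterOpt` and `MaxApply` -/

lemma iterOpt_add (g : Filling → Option Filling) (a b : ℕ) (t : Filling) :
    iterOpt g (a + b) t = (iterOpt g a t).bind (iterOpt g b) := by
  induction b with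
  | zero =>
    cases h : iterOpt g a t <;> rfl
  | succ b ih =>
    show (iterOpt g (a + b) t).bind g = (iterOpt g a t).bind (iterOpt g (b + 1))
    rw [ih]
    cases h : iterOpt g a t <;> rfl

lemma iterOpt_cons (g : Filling → Option Filling) (m : ℕ) {t t' : Filling}
    (h : g t = some t') : iterOpt g (m + 1) t = iterOpt g m t' := by
  induction m with
  | zero => simp [iterOpt, h]
  | succ m ih =>
    show iterOpt g (m + 1) t >>= g = iterOpt g m t' >>= g
    rw [ih]

lemma maxApply_unique (g : Filling → Option Filling) {t t1 t2 : Filling}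
    (h1 : MaxApply g t t1) (h2 : MaxApply g t t2) : t1 = t2 := by
  obtain ⟨⟨m1, hm1⟩, hn1⟩ := h1
  obtain ⟨⟨m2, hm2⟩, hn2⟩ := h2
  -- wlog m1 ≤ m2
  have key : ∀ (a b : ℕ) (u1 u2 : Filling), a ≤ b → iterOpt g a t = some u1 →
      iterOpt g b t = some u2 → g u1 = none → u1 = u2 := by
    intro a b u1 u2 hab ha hb hgu
    obtain ⟨d, rfl⟩ := Nat.exists_eq_add_of_le hab
    rw [iterOpt_add, ha] at hb
    rw [Option.bind_some] at hb
    cases d with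
    | zero => simpa [iterOpt] using hb
    | succ d =>
      have : iterOpt g (1 + d) u1 = none := by
        rw [iterOpt_add]
        have : iterOpt g 1 u1 = none := by simp [iterOpt, hgu]
        rw [this]; rfl
      rw [Nat.add_comm d 1] at hb
      rw [this] at hb; exact absurd hb (by simp)
  rcases Nat.le_total m1 m2 with h | h
  · exact key m1 m2 t1 t2 h hm1 hm2 hn1
  · exact (key m2 m1 t2 t1 h hm2 hm1 hn2).symm

lemma maxApply_exists (g : Filling → Option Filling) (μ : Filling → ℕ)
    (P : Filling → Prop)
    (hg : ∀ t, P t → ∀ t', g t = some t' → P t' ∧ μ t' < μ t) :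
    ∀ t, P t → ∃ t', MaxApply g t t' ∧ P t' := by
  suffices H : ∀ N t, μ t ≤ N → P t → ∃ t', MaxApply g t t' ∧ P t' by
    intro t hPt; exact H (μ t) t le_rfl hPt
  intro N
  induction N with
  | zero =>
    intro t hμ hPt
    cases hgt : g t with
    | none => exact ⟨t, ⟨⟨0, rfl⟩, hgt⟩, hPt⟩
    | some t'' =>
      obtain ⟨hP'', hlt⟩ := hg t hPt t'' hgt
      omega
  | succ N ih =>
    intro t hμ hPt
    cases hgt : g t with
    | none => exact ⟨t, ⟨⟨0, rfl⟩, hgt⟩, hPt⟩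
    | some t'' =>
      obtain ⟨hP'', hlt⟩ := hg t hPt t'' hgt
      obtain ⟨t', ⟨⟨m, hm⟩, hnone⟩, hP'⟩ := ih t'' (by omega) hP''
      exact ⟨t', ⟨⟨m + 1, by rw [iterOpt_cons g m hgt]; exact hm⟩, hnone⟩, hP'⟩

/-! #### Basic facts about `wordPerm` -/

lemma wordPerm_nil : wordPerm [] = 1 := rfl

lemma wordPerm_cons (i : ℕ) (l : List ℕ) :
    wordPerm (i :: l) = Equiv.swap i (i + 1) * wordPerm l := by
  simp [wordPerm]

lemma wordPerm_append (l1 l2 : List ℕ) :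
    wordPerm (l1 ++ l2) = wordPerm l1 * wordPerm l2 := by
  simp [wordPerm]

lemma wordPerm_singleton (i : ℕ) : wordPerm [i] = Equiv.swap i (i + 1) := by
  simp [wordPerm]

lemma wordPerm_reverse (l : List ℕ) : wordPerm l.reverse = (wordPerm l)⁻¹ := by
  induction l with
  | nil => simp [wordPerm]
  | cons i l ih =>
    rw [List.reverse_cons, wordPerm_append, ih, wordPerm_singleton, wordPerm_cons,
      mul_inv_rev, Equiv.swap_inv]

/-- A swap of adjacent letters moves a value by at most one. -/
lemma swap_adj_apply_cases (i x : ℕ) :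
    Equiv.swap i (i + 1) x = x ∨ Equiv.swap i (i + 1) x = i ∨
      Equiv.swap i (i + 1) x = i + 1 := by
  rw [Equiv.swap_apply_def]
  split_ifs <;> omega

lemma wordPerm_fix (l : List ℕ) (lo hi : ℕ) (hl : ∀ i ∈ l, lo ≤ i ∧ i + 1 ≤ hi)
    (x : ℕ) (hx : x < lo ∨ hi < x) : wordPerm l x = x := by
  induction l with
  | nil => rfl
  | cons i l ih =>
    rw [wordPerm_cons]
    have h1 := hl i (List.mem_cons_self)
    have h2 : wordPerm l x = x := ih (fun j hj => hl j (List.mem_cons_of_mem i hj))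
    rw [Equiv.Perm.mul_apply, h2, Equiv.swap_apply_of_ne_of_ne] <;> omega

lemma wordPerm_mem_Icc (n : ℕ) (l : List ℕ) (hl : ∀ i ∈ l, 1 ≤ i ∧ i < n)
    (x : ℕ) (hx : 1 ≤ x ∧ x ≤ n) : 1 ≤ wordPerm l x ∧ wordPerm l x ≤ n := by
  induction l with
  | nil => exact hx
  | cons i l ih =>
    rw [wordPerm_cons, Equiv.Perm.mul_apply]
    have h1 := hl i (List.mem_cons_self)
    have h2 := ih (fun j hj => hl j (List.mem_cons_of_mem i hj))
    rcases swap_adj_apply_cases i (wordPerm l x) with h | h | h <;> rw [h] <;> omega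

lemma swap_adj_le (i x : ℕ) : Equiv.swap i (i + 1) x ≤ x + 1 := by
  rw [Equiv.swap_apply_def]
  split_ifs <;> omega

lemma wordPerm_apply_le (l : List ℕ) (x : ℕ) : wordPerm l x ≤ x + l.length := by
  induction l with
  | nil => simp [wordPerm]
  | cons i l ih =>
    rw [wordPerm_cons, Equiv.Perm.mul_apply]
    have h3 := swap_adj_le i (wordPerm l x)
    simp only [List.length_cons]
    omega

/-! #### Inversions and Coxeter length for permutations -/

/-- The set of inversions of a permutation among positions `1, …, n`. -/
def invSet (n : ℕ) (u : Equiv.Perm ℕ) : Finset (ℕ × ℕ) :=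
  (Finset.Icc 1 n ×ˢ Finset.Icc 1 n).filter (fun p => p.1 < p.2 ∧ u p.2 < u p.1)

/-- The number of inversions. -/
def invN (n : ℕ) (u : Equiv.Perm ℕ) : ℕ := (invSet n u).card

lemma mem_invSet {n : ℕ} {u : Equiv.Perm ℕ} {a b : ℕ} :
    (a, b) ∈ invSet n u ↔ (1 ≤ a ∧ a ≤ n ∧ 1 ≤ b ∧ b ≤ n) ∧ a < b ∧ u b < u a := by
  simp only [invSet, Finset.mem_filter, Finset.mem_product, Finset.mem_Icc]
  tauto

lemma swap_adj_lt {i a b : ℕ} (hab : a < b) (hne : ¬(a = i ∧ b = i + 1)) :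
    Equiv.swap i (i + 1) a < Equiv.swap i (i + 1) b := by
  rw [not_and_or] at hne
  rw [Equiv.swap_apply_def, Equiv.swap_apply_def]
  split_ifs <;> omega

lemma swap_adj_Icc {n i x : ℕ} (h1 : 1 ≤ i) (h2 : i < n) (hx : 1 ≤ x ∧ x ≤ n) :
    1 ≤ Equiv.swap i (i + 1) x ∧ Equiv.swap i (i + 1) x ≤ n := by
  rw [Equiv.swap_apply_def]
  split_ifs <;> omega

lemma invSet_erase_eq (n i : ℕ) (h1 : 1 ≤ i) (h2 : i < n) (u : Equiv.Perm ℕ) :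
    (invSet n (u * Equiv.swap i (i + 1))).erase (i, i + 1) =
      ((invSet n u).erase (i, i + 1)).image
        (fun p : ℕ × ℕ => (Equiv.swap i (i + 1) p.1, Equiv.swap i (i + 1) p.2)) := by
  ext ⟨a, b⟩
  constructor
  · intro hab
    have hne := (Finset.mem_erase.mp hab).1
    have hmem := (Finset.mem_erase.mp hab).2
    rw [mem_invSet] at hmem
    obtain ⟨hgrid, hord, hval⟩ := hmem
    have hval' : u (Equiv.swap i (i + 1) b) < u (Equiv.swap i (i + 1) a) := hval
    refine Finset.mem_image.mpr ⟨(Equiv.swap i (i + 1) a, Equiv.swap i (i + 1) b), ?_, ?_⟩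
    · rw [Finset.mem_erase]
      constructor
      · intro hc
        rw [Prod.mk.injEq] at hc
        have ha' := congrArg (Equiv.swap i (i + 1)) hc.1
        have hb' := congrArg (Equiv.swap i (i + 1)) hc.2
        rw [Equiv.swap_apply_self, Equiv.swap_apply_left] at ha'
        rw [Equiv.swap_apply_self, Equiv.swap_apply_right] at hb'
        omega
      · rw [mem_invSet]
        have g1 := swap_adj_Icc h1 h2 ⟨hgrid.1, hgrid.2.1⟩ (x := a)
        have g2 := swap_adj_Icc h1 h2 ⟨hgrid.2.2.1, hgrid.2.2.2⟩ (x := b)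
        refine ⟨⟨g1.1, g1.2, g2.1, g2.2⟩, ?_, ?_⟩
        · exact swap_adj_lt hord (fun hc => hne (by rw [Prod.mk.injEq]; exact hc))
        · exact hval'
    · simp [Equiv.swap_apply_self]
  · intro hmem
    obtain ⟨⟨x, y⟩, hq, heq⟩ := Finset.mem_image.mp hmem
    rw [Prod.mk.injEq] at heq
    have ha : a = Equiv.swap i (i + 1) x := heq.1.symm
    have hb : b = Equiv.swap i (i + 1) y := heq.2.symm
    subst ha; subst hb
    have hne := (Finset.mem_erase.mp hq).1
    have hq' := (Finset.mem_erase.mp hq).2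
    rw [mem_invSet] at hq'
    obtain ⟨hgrid, hord, hval⟩ := hq'
    rw [Finset.mem_erase]
    constructor
    · intro hc
      rw [Prod.mk.injEq] at hc
      have hx' := congrArg (Equiv.swap i (i + 1)) hc.1
      have hy' := congrArg (Equiv.swap i (i + 1)) hc.2
      rw [Equiv.swap_apply_self, Equiv.swap_apply_left] at hx'
      rw [Equiv.swap_apply_self, Equiv.swap_apply_right] at hy'
      omega
    · rw [mem_invSet]
      have g1 := swap_adj_Icc h1 h2 ⟨hgrid.1, hgrid.2.1⟩ (x := x)
      have g2 := swap_adj_Icc h1 h2 ⟨hgrid.2.2.1, hgrid.2.2.2⟩ (x := y)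
      refine ⟨⟨g1.1, g1.2, g2.1, g2.2⟩, ?_, ?_⟩
      · exact swap_adj_lt hord (fun hc => hne (by rw [Prod.mk.injEq]; exact hc))
      · show (u * Equiv.swap i (i + 1)) (Equiv.swap i (i + 1) y) <
          (u * Equiv.swap i (i + 1)) (Equiv.swap i (i + 1) x)
        rw [Equiv.Perm.mul_apply, Equiv.Perm.mul_apply, Equiv.swap_apply_self,
          Equiv.swap_apply_self]
        exact hval

lemma swap_pair_injective (i : ℕ) :
    Function.Injective (fun p : ℕ × ℕ => (Equiv.swap i (i + 1) p.1, Equiv.swap i (i + 1) p.2)) := by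
  intro p q hpq
  rw [Prod.mk.injEq] at hpq
  have h1 := (Equiv.swap i (i + 1)).injective hpq.1
  have h2 := (Equiv.swap i (i + 1)).injective hpq.2
  exact Prod.ext h1 h2

lemma invN_mul_swap_lt {n i : ℕ} (h1 : 1 ≤ i) (h2 : i < n) (u : Equiv.Perm ℕ)
    (hlt : u i < u (i + 1)) :
    invN n (u * Equiv.swap i (i + 1)) = invN n u + 1 := by
  have he2 : (i, i + 1) ∈ invSet n (u * Equiv.swap i (i + 1)) := by
    rw [mem_invSet]
    refine ⟨by omega, by omega, ?_⟩
    show (u * Equiv.swap i (i + 1)) (i + 1) < (u * Equiv.swap i (i + 1)) i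
    rw [Equiv.Perm.mul_apply, Equiv.Perm.mul_apply, Equiv.swap_apply_left,
      Equiv.swap_apply_right]
    exact hlt
  have he1 : (i, i + 1) ∉ invSet n u := by
    rw [mem_invSet]
    intro hc
    omega
  calc invN n (u * Equiv.swap i (i + 1))
      = ((invSet n (u * Equiv.swap i (i + 1))).erase (i, i + 1)).card + 1 :=
        (Finset.card_erase_add_one he2).symm
    _ = (((invSet n u).erase (i, i + 1)).image
          (fun p : ℕ × ℕ => (Equiv.swap i (i + 1) p.1, Equiv.swap i (i + 1) p.2))).card + 1 := by
        rw [invSet_erase_eq n i h1 h2 u]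
    _ = ((invSet n u).erase (i, i + 1)).card + 1 := by
        rw [Finset.card_image_of_injective _ (swap_pair_injective i)]
    _ = invN n u + 1 := by rw [Finset.erase_eq_of_notMem he1]; rfl

lemma invN_mul_swap_gt {n i : ℕ} (h1 : 1 ≤ i) (h2 : i < n) (u : Equiv.Perm ℕ)
    (hgt : u (i + 1) < u i) :
    invN n (u * Equiv.swap i (i + 1)) + 1 = invN n u := by
  have key := invN_mul_swap_lt h1 h2 (u * Equiv.swap i (i + 1))
    (by rw [Equiv.Perm.mul_apply, Equiv.Perm.mul_apply, Equiv.swap_apply_left,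
      Equiv.swap_apply_right]; exact hgt)
  rw [mul_assoc, Equiv.swap_mul_self, mul_one] at key
  omega

lemma invN_one (n : ℕ) : invN n 1 = 0 := by
  have : invSet n 1 = ∅ := by
    apply Finset.filter_eq_empty_iff.mpr
    intro p _
    simp only [Equiv.Perm.one_apply]
    omega
  rw [invN, this, Finset.card_empty]

lemma invN_wordPerm_le (n : ℕ) (l : List ℕ) (hl : ∀ i ∈ l, 1 ≤ i ∧ i < n) :
    invN n (wordPerm l) ≤ l.length := by
  induction l using List.reverseRecOn with
  | nil => rw [wordPerm_nil, invN_one]; simp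
  | append_singleton l i ih =>
    have hi := hl i (by simp)
    have hl' : ∀ j ∈ l, 1 ≤ j ∧ j < n := fun j hj => hl j (by simp [hj])
    rw [wordPerm_append, wordPerm_singleton]
    rcases lt_trichotomy (wordPerm l i) (wordPerm l (i + 1)) with h | h | h
    · rw [invN_mul_swap_lt hi.1 hi.2 _ h]
      have := ih hl'
      simp only [List.length_append, List.length_singleton]
      omega
    · exact absurd ((wordPerm l).injective h) (by omega)
    · have := invN_mul_swap_gt hi.1 hi.2 _ h
      have := ih hl'
      simp only [List.length_append, List.length_singleton]
      omega

lemma invN_inv (n : ℕ) (u : Equiv.Perm ℕ)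
    (hu : ∀ x, 1 ≤ x → x ≤ n → 1 ≤ u x ∧ u x ≤ n)
    (hu' : ∀ x, 1 ≤ x → x ≤ n → 1 ≤ u⁻¹ x ∧ u⁻¹ x ≤ n) :
    invN n u⁻¹ = invN n u := by
  have himg : invSet n u⁻¹ = (invSet n u).image (fun p : ℕ × ℕ => (u p.2, u p.1)) := by
    ext ⟨a, b⟩
    constructor
    · intro hmem
      rw [mem_invSet] at hmem
      obtain ⟨hgrid, hord, hval⟩ := hmem
      refine Finset.mem_image.mpr ⟨(u⁻¹ b, u⁻¹ a), ?_, ?_⟩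
      · rw [mem_invSet]
        have g1 := hu' b hgrid.2.2.1 hgrid.2.2.2
        have g2 := hu' a hgrid.1 hgrid.2.1
        refine ⟨⟨g1.1, g1.2, g2.1, g2.2⟩, hval, ?_⟩
        rw [Equiv.Perm.apply_inv_self, Equiv.Perm.apply_inv_self]
        exact hord
      · show (u (u⁻¹ a), u (u⁻¹ b)) = (a, b)
        rw [Equiv.Perm.apply_inv_self, Equiv.Perm.apply_inv_self]
    · intro hmem
      obtain ⟨⟨x, y⟩, hq, heq⟩ := Finset.mem_image.mp hmem
      rw [Prod.mk.injEq] at heq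
      rw [mem_invSet] at hq
      obtain ⟨hgrid, hord, hval⟩ := hq
      rw [mem_invSet]
      have g1 := hu y hgrid.2.2.1 hgrid.2.2.2
      have g2 := hu x hgrid.1 hgrid.2.1
      have hxa : u⁻¹ a = y := by rw [← heq.1, Equiv.Perm.inv_apply_self]
      have hxb : u⁻¹ b = x := by rw [← heq.2, Equiv.Perm.inv_apply_self]
      refine ⟨?_, ?_, ?_⟩
      · rw [← heq.1, ← heq.2]; exact ⟨g1.1, g1.2, g2.1, g2.2⟩
      · rw [← heq.1, ← heq.2]; exact hval
      · rw [hxa, hxb]; exact hord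
  have hinj : Function.Injective (fun p : ℕ × ℕ => (u p.2, u p.1)) := by
    intro p q hpq
    rw [Prod.mk.injEq] at hpq
    exact Prod.ext (u.injective hpq.2) (u.injective hpq.1)
  rw [invN, himg, Finset.card_image_of_injective _ hinj]; rfl

lemma descent_exists (n : ℕ) (l : List ℕ) (hl : ∀ i ∈ l, 1 ≤ i ∧ i < n)
    (hne : wordPerm l ≠ 1) :
    ∃ i, 1 ≤ i ∧ i < n ∧ (wordPerm l) (i + 1) < (wordPerm l) i := by
  by_contra hcon
  push_neg at hcon
  set v := wordPerm l with hv
  have hmono : ∀ i, 1 ≤ i → i < n → v i < v (i + 1) := by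
    intro i hi hin
    have h := hcon i hi hin
    exact lt_of_le_of_ne h (fun hc => by have := v.injective hc; omega)
  have hIcc : ∀ x, 1 ≤ x ∧ x ≤ n → 1 ≤ v x ∧ v x ≤ n :=
    fun x hx => wordPerm_mem_Icc n l hl x hx
  have hge : ∀ x, 1 ≤ x → x ≤ n → x ≤ v x := by
    intro x
    induction x with
    | zero => omega
    | succ x ih =>
      intro _ hxn
      rcases Nat.eq_zero_or_pos x with rfl | hx
      · exact (hIcc 1 ⟨le_refl 1, hxn⟩).1
      · have hA := ih (by omega) (by omega)
        have hB := hmono x hx (by omega)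
        omega
  have hfix : ∀ d x, x + d = n → 1 ≤ x → v x = x := by
    intro d
    induction d with
    | zero =>
      intro x hx h1
      have hA := hIcc x ⟨h1, by omega⟩
      have hB := hge x h1 (by omega)
      omega
    | succ d ih =>
      intro x hx h1
      have h2 := ih (x + 1) (by omega) (by omega)
      have h3 := hmono x h1 (by omega)
      have h4 := hge x h1 (by omega)
      omega
  apply hne
  apply Equiv.ext
  intro x
  show v x = x
  rcases Nat.lt_or_ge x 1 with hx | hx
  · exact wordPerm_fix l 1 n (fun j hj => ⟨(hl j hj).1, (hl j hj).2⟩) x (Or.inl hx)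
  · rcases le_or_gt x n with hxn | hxn
    · exact hfix (n - x) x (by omega) hx
    · exact wordPerm_fix l 1 n (fun j hj => ⟨(hl j hj).1, (hl j hj).2⟩) x (Or.inr hxn)

lemma exists_word_of_invN (n : ℕ) :
    ∀ N (v : Equiv.Perm ℕ) (l : List ℕ), (∀ i ∈ l, 1 ≤ i ∧ i < n) → wordPerm l = v →
      invN n v = N →
      ∃ l', (∀ i ∈ l', 1 ≤ i ∧ i < n) ∧ wordPerm l' = v ∧ l'.length = N := by
  intro N
  induction N using Nat.strong_induction_on with
  | _ N ih =>
    intro v l hl hlv hN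
    by_cases hv : v = 1
    · refine ⟨[], by simp, by rw [wordPerm_nil, hv], ?_⟩
      rw [hv, invN_one] at hN
      simp [← hN]
    · obtain ⟨i, hi1, hin, hd⟩ := descent_exists n l hl (hlv ▸ hv)
      rw [hlv] at hd
      have hkey := invN_mul_swap_gt hi1 hin v hd
      have hN1 : 1 ≤ N := by omega
      have hletters : ∀ j ∈ l ++ [i], 1 ≤ j ∧ j < n := by
        intro j hj
        rcases List.mem_append.mp hj with hj | hj
        · exact hl j hj
        · simp at hj; subst hj; exact ⟨hi1, hin⟩
      have hw : wordPerm (l ++ [i]) = v * Equiv.swap i (i + 1) := by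
        rw [wordPerm_append, wordPerm_singleton, hlv]
      obtain ⟨l', hl', hlv', hlen'⟩ := ih (N - 1) (by omega) (v * Equiv.swap i (i + 1))
        (l ++ [i]) hletters hw (by omega)
      refine ⟨l' ++ [i], ?_, ?_, ?_⟩
      · intro j hj
        rcases List.mem_append.mp hj with hj | hj
        · exact hl' j hj
        · simp at hj; subst hj; exact ⟨hi1, hin⟩
      · rw [wordPerm_append, wordPerm_singleton, hlv', mul_assoc, Equiv.swap_mul_self,
          mul_one]
      · simp [hlen']; omega

lemma isReducedWord_tail {n : ℕ} {w : Equiv.Perm ℕ} {i : ℕ} {rest : List ℕ}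
    (h : IsReducedWord n w (i :: rest)) : IsReducedWord n (wordPerm rest) rest := by
  obtain ⟨hl, hw, hmin⟩ := h
  refine ⟨fun j hj => hl j (List.mem_cons_of_mem i hj), rfl, ?_⟩
  intro l' hl' hlv'
  have hmem : ∀ j ∈ i :: l', 1 ≤ j ∧ j < n := by
    intro j hj
    rcases List.mem_cons.mp hj with rfl | hj
    · exact hl _ (List.mem_cons_self)
    · exact hl' j hj
  have := hmin (i :: l') hmem (by rw [wordPerm_cons, hlv', ← wordPerm_cons]; exact hw)
  simpa using this

lemma reduced_length_eq_invN {n : ℕ} {w : Equiv.Perm ℕ} {word : List ℕ}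
    (h : IsReducedWord n w word) : word.length = invN n w := by
  have h1 : invN n w ≤ word.length := by
    have := invN_wordPerm_le n word h.1
    rw [h.2.1] at this
    exact this
  obtain ⟨l', hl', hv', hlen⟩ := exists_word_of_invN n (invN n w) w word h.1 h.2.1 rfl
  have h2 := h.2.2 l' hl' hv'
  omega

lemma reduced_head_lt {n : ℕ} {w : Equiv.Perm ℕ} {i : ℕ} {rest : List ℕ}
    (h : IsReducedWord n w (i :: rest)) :
    (wordPerm rest)⁻¹ i < (wordPerm rest)⁻¹ (i + 1) := by
  have hi := h.1 i (List.mem_cons_self)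
  have htail := isReducedWord_tail h
  have hlrest : rest.length = invN n (wordPerm rest) := reduced_length_eq_invN htail
  have hlw : (i :: rest).length = invN n w := reduced_length_eq_invN h
  have hw : w = Equiv.swap i (i + 1) * wordPerm rest := by rw [← h.2.1, wordPerm_cons]
  by_contra hcon
  push_neg at hcon
  have hne : (wordPerm rest)⁻¹ i ≠ (wordPerm rest)⁻¹ (i + 1) := by
    intro hc
    have := (wordPerm rest)⁻¹.injective hc
    omega
  have hgt : (wordPerm rest)⁻¹ (i + 1) < (wordPerm rest)⁻¹ i := by omega
  have hkey := invN_mul_swap_gt hi.1 hi.2 (wordPerm rest)⁻¹ hgt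
  have h1 : (wordPerm rest)⁻¹ * Equiv.swap i (i + 1) = w⁻¹ := by
    rw [hw, mul_inv_rev, Equiv.swap_inv]
  have hrl : ∀ j ∈ rest, 1 ≤ j ∧ j < n := htail.1
  have hwl : ∀ j ∈ (i :: rest), 1 ≤ j ∧ j < n := h.1
  have hrevl : ∀ j ∈ rest.reverse, 1 ≤ j ∧ j < n := fun j hj => hrl j (List.mem_reverse.mp hj)
  have hrevw : ∀ j ∈ (i :: rest).reverse, 1 ≤ j ∧ j < n :=
    fun j hj => hwl j (List.mem_reverse.mp hj)
  have eIccU : ∀ x, 1 ≤ x → x ≤ n → 1 ≤ (wordPerm rest) x ∧ (wordPerm rest) x ≤ n :=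
    fun x hx1 hx2 => wordPerm_mem_Icc n rest hrl x ⟨hx1, hx2⟩
  have eIccUi : ∀ x, 1 ≤ x → x ≤ n →
      1 ≤ (wordPerm rest)⁻¹ x ∧ (wordPerm rest)⁻¹ x ≤ n := by
    intro x hx1 hx2
    rw [← wordPerm_reverse]
    exact wordPerm_mem_Icc n rest.reverse hrevl x ⟨hx1, hx2⟩
  have eIccW : ∀ x, 1 ≤ x → x ≤ n → 1 ≤ w x ∧ w x ≤ n := by
    intro x hx1 hx2
    rw [← h.2.1]
    exact wordPerm_mem_Icc n (i :: rest) hwl x ⟨hx1, hx2⟩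
  have eIccWi : ∀ x, 1 ≤ x → x ≤ n → 1 ≤ w⁻¹ x ∧ w⁻¹ x ≤ n := by
    intro x hx1 hx2
    rw [← h.2.1, ← wordPerm_reverse]
    exact wordPerm_mem_Icc n (i :: rest).reverse hrevw x ⟨hx1, hx2⟩
  have e1 : invN n w⁻¹ = invN n w := invN_inv n w eIccW eIccWi
  have e2 : invN n (wordPerm rest)⁻¹ = invN n (wordPerm rest) := invN_inv n _ eIccU eIccUi
  rw [h1, e1, e2] at hkey
  rw [List.length_cons] at hlw
  omega

/-! #### The entry substitution maps -/

/-- `entMap i` replaces `i+1` by `i`. -/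
def entMap (i a : ℕ) : ℕ := if a = i + 1 then i else a

/-- The composite entry map of a word, applied left to right. -/
def Phi : List ℕ → ℕ → ℕ
  | [] => fun a => a
  | i :: rest => fun a => Phi rest (entMap i a)

lemma entMap_pos {i a : ℕ} (hi : 1 ≤ i) (ha : 1 ≤ a) : 1 ≤ entMap i a := by
  unfold entMap; split_ifs <;> omega

lemma phi_eq_one_iff {n : ℕ} {w : Equiv.Perm ℕ} {word : List ℕ}
    (hred : IsReducedWord n w word) :
    ∀ a, 1 ≤ a → (Phi word a = 1 ↔ a ≤ w 1) := by
  induction word generalizing w with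
  | nil =>
    intro a ha
    have hw : w = 1 := by rw [← hred.2.1, wordPerm_nil]
    subst hw
    show a = 1 ↔ a ≤ (1 : Equiv.Perm ℕ) 1
    rw [Equiv.Perm.one_apply]
    omega
  | cons i rest IH =>
    intro a ha
    have hi := hred.1 i (List.mem_cons_self)
    have htail := isReducedWord_tail hred
    have hIH := IH htail
    have hkey := reduced_head_lt hred
    have hu0 : wordPerm rest 0 = 0 :=
      wordPerm_fix rest 1 n (fun j hj => ⟨(htail.1 j hj).1, by have := (htail.1 j hj).2; omega⟩)
        0 (Or.inl (by omega))
    have hu1 : 1 ≤ wordPerm rest 1 := by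
      by_contra hc
      have h0 : wordPerm rest 1 = 0 := by omega
      have := (wordPerm rest).injective (h0.trans hu0.symm)
      omega
    have hbad : wordPerm rest 1 ≠ i + 1 := by
      intro hc
      have h1 : (wordPerm rest)⁻¹ (i + 1) = 1 := by
        rw [← hc, Equiv.Perm.inv_apply_self]
      have h2 : (wordPerm rest)⁻¹ i = 0 := by omega
      have h3 : wordPerm rest 0 = i := by
        rw [← h2, Equiv.Perm.apply_inv_self]
      rw [hu0] at h3
      omega
    have hw1 : w 1 = Equiv.swap i (i + 1) (wordPerm rest 1) := by
      rw [← hred.2.1, wordPerm_cons, Equiv.Perm.mul_apply]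
    have hPhi : Phi (i :: rest) a = Phi rest (entMap i a) := rfl
    rw [hPhi, hIH (entMap i a) (entMap_pos hi.1 ha)]
    by_cases hiu : i = wordPerm rest 1
    · have hw1' : w 1 = i + 1 := by rw [hw1, ← hiu, Equiv.swap_apply_left]
      rw [hw1']
      unfold entMap
      split_ifs with h <;> omega
    · have hswap : Equiv.swap i (i + 1) (wordPerm rest 1) = wordPerm rest 1 :=
        Equiv.swap_apply_of_ne_of_ne (fun hc => hiu hc.symm) hbad
      rw [hw1, hswap]
      unfold entMap
      split_ifs with h <;> omega

/-! #### The minimal coset representative word -/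

lemma wordPerm_range_cycle : ∀ m : ℕ, wordPerm (((List.range m).map (· + 1)).reverse) 1 = m + 1 := by
  intro m
  induction m with
  | zero => rfl
  | succ m ih =>
    have hstep : ((List.range (m + 1)).map (· + 1)).reverse =
        (m + 1) :: ((List.range m).map (· + 1)).reverse := by
      rw [List.range_succ, List.map_append, List.reverse_append]
      rfl
    rw [hstep, wordPerm_cons, Equiv.Perm.mul_apply, ih, Equiv.swap_apply_left]

lemma wordPerm_range_add : ∀ (d c : ℕ), wordPerm ((List.range d).map (· + c)) (c + d) = c := by
  intro d
  induction d with
  | zero => intro c; rfl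
  | succ d ih =>
    intro c
    have hmap : (List.range (d + 1)).map (· + c) = (List.range d).map (· + c) ++ [d + c] := by
      rw [List.range_succ, List.map_append]
      rfl
    rw [hmap, wordPerm_append, wordPerm_singleton, Equiv.Perm.mul_apply]
    have harg : c + (d + 1) = (d + c) + 1 := by omega
    rw [harg, Equiv.swap_apply_right]
    have hcomm : d + c = c + d := by omega
    rw [hcomm]
    exact ih c

/-! #### Parabolic subgroup lemmas -/

lemma parabolic_fix_one {n : ℕ} {v : Equiv.Perm ℕ} (hv : v ∈ parabolic n) : v 1 = 1 := by
  refine Subgroup.closure_induction (p := fun g _ => g 1 = 1) ?_ ?_ ?_ ?_ hv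
  · rintro x ⟨i, hi2, hin, rfl⟩
    exact Equiv.swap_apply_of_ne_of_ne (by omega) (by omega)
  · rfl
  · intro x y _ _ hx hy
    rw [Equiv.Perm.mul_apply, hy, hx]
  · intro x _ hx
    nth_rewrite 1 [← hx]
    rw [Equiv.Perm.inv_apply_self]

lemma parabolic_has_word {n : ℕ} {v : Equiv.Perm ℕ} (hv : v ∈ parabolic n) :
    ∃ l : List ℕ, (∀ i ∈ l, 1 ≤ i ∧ i < n) ∧ wordPerm l = v := by
  refine Subgroup.closure_induction
    (p := fun g _ => ∃ l : List ℕ, (∀ i ∈ l, 1 ≤ i ∧ i < n) ∧ wordPerm l = g) ?_ ?_ ?_ ?_ hv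
  · rintro x ⟨i, hi2, hin, rfl⟩
    exact ⟨[i], by intro j hj; simp at hj; omega, wordPerm_singleton i⟩
  · exact ⟨[], by simp, rfl⟩
  · rintro x y _ _ ⟨l1, hl1, rfl⟩ ⟨l2, hl2, rfl⟩
    refine ⟨l1 ++ l2, ?_, wordPerm_append l1 l2⟩
    intro j hj
    rcases List.mem_append.mp hj with hj | hj
    · exact hl1 j hj
    · exact hl2 j hj
  · rintro x _ ⟨l, hl, rfl⟩
    exact ⟨l.reverse, fun j hj => hl j (List.mem_reverse.mp hj), wordPerm_reverse l⟩

lemma mem_parabolic_of_fix {n : ℕ} :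
    ∀ b, b ≤ n → ∀ v : Equiv.Perm ℕ, (∀ x, v x ≠ x → 2 ≤ x ∧ x ≤ b) → v ∈ parabolic n := by
  intro b
  induction b with
  | zero =>
    intro _ v hv
    have hv1 : v = 1 := by
      apply Equiv.ext
      intro x
      by_contra hc
      have := hv x hc
      omega
    rw [hv1]
    exact Subgroup.one_mem _
  | succ b ih =>
    intro hbn v hv
    by_cases hfix : v (b + 1) = b + 1
    · apply ih (by omega)
      intro x hx
      have h1 := hv x hx
      have h2 : x ≠ b + 1 := fun hc => by rw [hc] at hx; exact hx hfix
      omega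
    · have hvc : v (v⁻¹ (b + 1)) = b + 1 := Equiv.Perm.apply_inv_self v (b + 1)
      set c := v⁻¹ (b + 1) with hcdef
      have hcne : c ≠ b + 1 := fun h => hfix (h ▸ hvc)
      have hcmoved : v c ≠ c := by
        rw [hvc]
        exact fun h => hcne h.symm
      have hcb := hv c hcmoved
      set l := (List.range (b + 1 - c)).map (· + c) with hl
      set σ := wordPerm l with hσ
      have hσb : σ (b + 1) = c := by
        rw [hσ, hl]
        have harg : c + (b + 1 - c) = b + 1 := by omega
        have hwr := wordPerm_range_add (b + 1 - c) c
        rw [harg] at hwr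
        exact hwr
      have hletters : ∀ j ∈ l, c ≤ j ∧ j + 1 ≤ b + 1 := by
        intro j hj
        rw [hl] at hj
        simp only [List.mem_map, List.mem_range] at hj
        obtain ⟨x, hx, rfl⟩ := hj
        omega
      have hσfix : ∀ y, y < c ∨ b + 1 < y → σ y = y :=
        fun y hy => wordPerm_fix l c (b + 1) hletters y hy
      have hσpar : σ ∈ parabolic n := by
        rw [hσ]
        show (l.map fun i => Equiv.swap i (i + 1)).prod ∈ parabolic n
        apply list_prod_mem
        intro x hx
        rw [List.mem_map] at hx
        obtain ⟨j, hj, rfl⟩ := hx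
        have hjb := hletters j hj
        exact Subgroup.subset_closure ⟨j, by omega, by omega, rfl⟩
      have hnext : v * σ ∈ parabolic n := by
        apply ih (by omega)
        intro x hx
        rcases lt_or_ge x c with hxc | hxc
        · have hσx : σ x = x := hσfix x (Or.inl hxc)
          rw [Equiv.Perm.mul_apply, hσx] at hx
          have := hv x hx
          omega
        · rcases le_or_gt x (b + 1) with hxb | hxb
          · have hx1 : x ≠ b + 1 := fun h => by
              rw [h, Equiv.Perm.mul_apply, hσb, hvc] at hx
              exact hx rfl
            omega
          · have hσx : σ x = x := hσfix x (Or.inr hxb)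
            rw [Equiv.Perm.mul_apply, hσx] at hx
            have := hv x hx
            omega
      have hveq : v = (v * σ) * σ⁻¹ := (mul_inv_cancel_right v σ).symm
      rw [hveq]
      exact Subgroup.mul_mem _ hnext (Subgroup.inv_mem _ hσpar)

/-! #### Structure of one-row set-valued tableaux -/

lemma rowShape_zero {k : ℕ} : rowShape k 0 = k := rfl

lemma rowShape_pos {k r : ℕ} (hr : r ≠ 0) : rowShape k r = 0 := by simp [rowShape, hr]

lemma svt_empty_row {n k : ℕ} {t : Filling} (h : IsSVT n (rowShape k) t) {r : ℕ}
    (hr : r ≠ 0) (c : ℕ) : t r c = ∅ :=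
  h.emptyOutside r c (by rw [rowShape_pos hr]; omega)

lemma svt_empty_col {n k : ℕ} {t : Filling} (h : IsSVT n (rowShape k) t) {c : ℕ}
    (hc : k ≤ c) : t 0 c = ∅ :=
  h.emptyOutside 0 c (by rw [rowShape_zero]; omega)

lemma svt_box_empty {n k : ℕ} {t : Filling} (h : IsSVT n (rowShape k) t) {r c : ℕ}
    (hrc : ¬(r = 0 ∧ c < k)) : t r c = ∅ := by
  rcases eq_or_ne r 0 with rfl | hr
  · exact svt_empty_col h (by omega)
  · exact svt_empty_row h hr c

lemma colHas_iff {n k : ℕ} {t : Filling} (h : IsSVT n (rowShape k) t) (hn : 1 ≤ n)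
    {a c : ℕ} : colHas n t a c ↔ a ∈ t 0 c := by
  constructor
  · rintro ⟨r, hr, hmem⟩
    rcases eq_or_ne r 0 with rfl | hr0
    · exact hmem
    · rw [svt_empty_row h hr0 c] at hmem
      exact absurd hmem (Finset.notMem_empty a)
  · intro hmem
    exact ⟨0, by omega, hmem⟩

lemma row_le {n k : ℕ} {t : Filling} (h : IsSVT n (rowShape k) t) {c c' a b : ℕ}
    (hcc : c < c') (ha : a ∈ t 0 c) (hb : b ∈ t 0 c') : a ≤ b := by
  suffices H : ∀ d c a b, a ∈ t 0 c → b ∈ t 0 (c + d + 1) → a ≤ b by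
    have hd : c' = c + (c' - c - 1) + 1 := by omega
    exact H (c' - c - 1) c a b ha (by rw [← hd]; exact hb)
  intro d
  induction d with
  | zero => intro c a b ha hb; exact h.rowWeak 0 c a b ha hb
  | succ d ih =>
    intro c a b ha hb
    rcases lt_or_ge (c + d + 1) k with hck | hck
    · obtain ⟨x, hx⟩ := h.boxNonempty 0 (c + d + 1) (by rw [rowShape_zero]; exact hck)
      have h1 := ih c a x ha hx
      have h2 := h.rowWeak 0 (c + d + 1) x b hx hb
      omega
    · have he : t 0 (c + (d + 1) + 1) = ∅ := svt_empty_col h (by omega)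
      rw [he] at hb
      exact absurd hb (Finset.notMem_empty b)

lemma colSign_false_iff {n k : ℕ} {t : Filling} (h : IsSVT n (rowShape k) t) (hn : 1 ≤ n)
    {i c : ℕ} : colSign n t i c = some false ↔ ((i + 1) ∈ t 0 c ∧ i ∉ t 0 c) := by
  unfold colSign
  simp only [colHas_iff h hn]
  split_ifs with h1 h2
  · constructor
    · intro hc; exact absurd hc (by simp)
    · intro hc; exact absurd hc.1 h1.2
  · constructor
    · intro _; exact h2
    · intro _; rfl
  · constructor
    · intro hc; exact absurd hc (by simp)
    · intro hc; exact absurd ⟨hc.1, hc.2⟩ h2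

lemma colSign_true_iff {n k : ℕ} {t : Filling} (h : IsSVT n (rowShape k) t) (hn : 1 ≤ n)
    {i c : ℕ} : colSign n t i c = some true ↔ (i ∈ t 0 c ∧ (i + 1) ∉ t 0 c) := by
  unfold colSign
  simp only [colHas_iff h hn]
  split_ifs with h1 h2
  · constructor
    · intro _; exact h1
    · intro _; rfl
  · constructor
    · intro hc; exact absurd hc (by simp)
    · intro hc; exact absurd hc.2 (by intro hni; exact hni h2.1)
  · constructor
    · intro hc; exact absurd hc (by simp)
    · intro hc; exact absurd ⟨hc.1, hc.2⟩ h1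

lemma pctr_all_false : ∀ w : List Bool, (∀ b ∈ w, b = false) → pctr w = 0 := by
  intro w
  induction w with
  | nil => intro _; rfl
  | cons b w ih =>
    intro hw
    have hb := hw b (List.mem_cons_self)
    subst hb
    show pctr w - 1 = 0
    rw [ih (fun x hx => hw x (List.mem_cons_of_mem _ hx))]

lemma mem_drop_range {m kk x : ℕ} (h : x ∈ (List.range kk).drop m) : m ≤ x ∧ x < kk := by
  have h1 : x ∈ List.range kk := List.mem_of_mem_drop h
  rw [List.mem_range] at h1
  obtain ⟨j, hj, hx⟩ := List.mem_iff_getElem.mp h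
  rw [List.getElem_drop, List.getElem_range] at hx
  omega

lemma minusCol_iff {n k : ℕ} {t : Filling} (h : IsSVT n (rowShape k) t) (hn : 1 ≤ n)
    {i c : ℕ} : MinusCol n k t i c ↔ (c < k ∧ (i + 1) ∈ t 0 c ∧ i ∉ t 0 c) := by
  constructor
  · rintro ⟨h1, h2, _⟩
    exact ⟨h1, (colSign_false_iff h hn).mp h2⟩
  · rintro ⟨h1, h2, h3⟩
    refine ⟨h1, (colSign_false_iff h hn).mpr ⟨h2, h3⟩, ?_⟩
    apply pctr_all_false
    intro b hb
    obtain ⟨c'', hc'', hsign⟩ := List.mem_filterMap.mp hb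
    have hcc := mem_drop_range hc''
    cases b with
    | false => rfl
    | true =>
      exfalso
      have hmem := (colSign_true_iff h hn).mp hsign
      have := row_le h (show c < c'' by omega) h2 hmem.1
      omega

lemma exists_eBoxCol_of_bad {n k : ℕ} {t : Filling} (h : IsSVT n (rowShape k) t)
    (hn : 1 ≤ n) {i : ℕ} (hbad : ∃ c, c < k ∧ (i + 1) ∈ t 0 c ∧ i ∉ t 0 c) :
    ∃ c, eBoxCol n k t i c := by
  have hm : ∃ c, MinusCol n k t i c := by
    obtain ⟨c, hc⟩ := hbad
    exact ⟨c, (minusCol_iff h hn).mpr hc⟩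
  exact ⟨Nat.find hm, Nat.find_spec hm, fun c' hc' => Nat.find_min' hm hc'⟩

/-! #### `updateBox` and the row measure -/

lemma updateBox_same (t : Filling) (r c : ℕ) (A : Finset ℕ) : updateBox t r c A r c = A := by
  simp [updateBox]

lemma updateBox_ne (t : Filling) (r c : ℕ) (A : Finset ℕ) {r' c' : ℕ}
    (h : ¬(r' = r ∧ c' = c)) : updateBox t r c A r' c' = t r' c' := by
  simp only [updateBox, if_neg h]

/-- The total sum of all entries: a termination measure. -/
def rowMeasure (n k : ℕ) (t : Filling) : ℕ :=
  ∑ p ∈ Finset.range n ×ˢ Finset.range k, ∑ a ∈ t p.1 p.2, a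

lemma measure_updateBox {n k : ℕ} (t : Filling) (r c : ℕ) (A : Finset ℕ)
    (hr : r < n) (hc : c < k) :
    rowMeasure n k (updateBox t r c A) + ∑ a ∈ t r c, a
      = rowMeasure n k t + ∑ a ∈ A, a := by
  have hmem : (r, c) ∈ Finset.range n ×ˢ Finset.range k := by
    rw [Finset.mem_product, Finset.mem_range, Finset.mem_range]
    exact ⟨hr, hc⟩
  unfold rowMeasure
  rw [← Finset.sum_erase_add _ _ hmem, ← Finset.sum_erase_add _ _ hmem]
  have hcong : ∑ p ∈ (Finset.range n ×ˢ Finset.range k).erase (r, c),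
      ∑ a ∈ updateBox t r c A p.1 p.2, a
      = ∑ p ∈ (Finset.range n ×ˢ Finset.range k).erase (r, c), ∑ a ∈ t p.1 p.2, a := by
    apply Finset.sum_congr rfl
    intro p hp
    have hpne := (Finset.mem_erase.mp hp).1
    rw [updateBox_ne t r c A (fun hcon => hpne (Prod.ext hcon.1 hcon.2))]
  rw [hcong, updateBox_same]
  dsimp only
  omega

/-- A convenient constructor for one-row SVTs. -/
lemma isSVT_of_row {n k : ℕ} (t : Filling)
    (h1 : ∀ c, c < k → (t 0 c).Nonempty)
    (h2 : ∀ r c, ¬(r = 0 ∧ c < k) → t r c = ∅)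
    (h3 : ∀ c a, a ∈ t 0 c → 1 ≤ a ∧ a ≤ n)
    (h4 : ∀ c a b, a ∈ t 0 c → b ∈ t 0 (c + 1) → a ≤ b) :
    IsSVT n (rowShape k) t := by
  constructor
  · intro r c hc
    rcases eq_or_ne r 0 with rfl | hr
    · exact h1 c (by rw [rowShape_zero] at hc; exact hc)
    · rw [rowShape_pos hr] at hc; omega
  · intro r c hc
    apply h2
    rintro ⟨rfl, hck⟩
    rw [rowShape_zero] at hc
    exact hc hck
  · intro r c a ha
    rcases eq_or_ne r 0 with rfl | hr
    · by_cases hck : c < k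
      · exact h3 c a ha
      · rw [h2 0 c (by omega)] at ha; exact absurd ha (Finset.notMem_empty a)
    · rw [h2 r c (fun hcon => hr hcon.1)] at ha
      exact absurd ha (Finset.notMem_empty a)
  · intro r c a b ha hb
    rcases eq_or_ne r 0 with rfl | hr
    · exact h4 c a b ha hb
    · rw [h2 r c (fun hcon => hr hcon.1)] at ha
      exact absurd ha (Finset.notMem_empty a)
  · intro r c a b _ hb
    rw [h2 (r + 1) c (fun hcon => by omega)] at hb
    exact absurd hb (Finset.notMem_empty b)

/-! #### Images under the entry map -/

lemma image_entMap_insert {i : ℕ} {S : Finset ℕ} (h : (i + 1) ∈ S) :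
    (insert i S).image (entMap i) = S.image (entMap i) := by
  rw [Finset.image_insert]
  apply Finset.insert_eq_self.mpr
  exact Finset.mem_image.mpr ⟨i + 1, h, by simp [entMap]⟩

lemma image_entMap_erase {i : ℕ} {S : Finset ℕ} (h : i ∈ S) :
    (S.erase (i + 1)).image (entMap i) = S.image (entMap i) := by
  ext x
  simp only [Finset.mem_image]
  constructor
  · rintro ⟨a, ha, rfl⟩
    exact ⟨a, Finset.mem_of_mem_erase ha, rfl⟩
  · rintro ⟨a, ha, rfl⟩
    rcases eq_or_ne a (i + 1) with rfl | hne
    · exact ⟨i, Finset.mem_erase.mpr ⟨by omega, h⟩, by simp [entMap]⟩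
    · exact ⟨a, Finset.mem_erase.mpr ⟨hne, ha⟩, rfl⟩

lemma image_entMap_replace {i : ℕ} {S : Finset ℕ} (h : (i + 1) ∈ S) :
    (insert i (S.erase (i + 1))).image (entMap i) = S.image (entMap i) := by
  conv_rhs => rw [← Finset.insert_erase h]
  rw [Finset.image_insert, Finset.image_insert]
  have he : entMap i i = entMap i (i + 1) := by simp [entMap]
  rw [he]

lemma image_entMap_of_not_mem {i : ℕ} {S : Finset ℕ} (h : (i + 1) ∉ S) :
    S.image (entMap i) = S := by
  ext x
  simp only [Finset.mem_image]
  constructor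
  · rintro ⟨a, ha, rfl⟩
    have : a ≠ i + 1 := fun hc => h (hc ▸ ha)
    rw [entMap, if_neg this]
    exact ha
  · intro hx
    have : x ≠ i + 1 := fun hc => h (hc ▸ hx)
    exact ⟨x, hx, by rw [entMap, if_neg this]⟩

/-! #### Evaluation of the crystal operators on one-row tableaux -/

lemma eRaw_eval (n : ℕ) (lam : ℕ → ℕ) (i : ℕ) (t : Filling)
    (hex : ∃ c, eBoxCol n (lam 0) t i c)
    (hr : ∃ r, r < n ∧ (i + 1) ∈ t r (Classical.choose hex)) :
    eRaw n lam i t =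
      if 0 < Classical.choose hex ∧
          (i + 1) ∈ t (Classical.choose hr) (Classical.choose hex - 1) then
        some (updateBox (updateBox t (Classical.choose hr) (Classical.choose hex - 1)
          ((t (Classical.choose hr) (Classical.choose hex - 1)).erase (i + 1)))
          (Classical.choose hr) (Classical.choose hex)
          (insert i (t (Classical.choose hr) (Classical.choose hex))))
      else some (updateBox t (Classical.choose hr) (Classical.choose hex)
        (insert i ((t (Classical.choose hr) (Classical.choose hex)).erase (i + 1)))) := by
  unfold eRaw
  rw [dif_pos hex, dif_pos hr]

lemma eK_eval (n : ℕ) (lam : ℕ → ℕ) (i : ℕ) (t : Filling)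
    (h : ∃ p : ℕ × ℕ, p.1 < n ∧ p.2 < lam p.1 ∧ i ∈ t p.1 p.2 ∧ (i + 1) ∈ t p.1 p.2) :
    eK n lam i t = some (updateBox t (Classical.choose h).1 (Classical.choose h).2
      ((t (Classical.choose h).1 (Classical.choose h).2).erase (i + 1))) := by
  unfold eK
  rw [dif_pos h]

lemma eK_none_iff (n : ℕ) (lam : ℕ → ℕ) (i : ℕ) (t : Filling) :
    eK n lam i t = none ↔
      ¬∃ p : ℕ × ℕ, p.1 < n ∧ p.2 < lam p.1 ∧ i ∈ t p.1 p.2 ∧ (i + 1) ∈ t p.1 p.2 := by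
  unfold eK
  split_ifs with h <;> simp [h]

lemma eRaw_none_iff {n k i : ℕ} {t : Filling} (hT : IsSVT n (rowShape k) t) (hn : 1 ≤ n) :
    eRaw n (rowShape k) i t = none ↔ ∀ c, c < k → (i + 1) ∈ t 0 c → i ∈ t 0 c := by
  constructor
  · intro hnone c hc hmem
    by_contra hni
    have hex : ∃ c, eBoxCol n (rowShape k 0) t i c :=
      exists_eBoxCol_of_bad hT hn ⟨c, hc, hmem, hni⟩
    have spec := Classical.choose_spec hex
    have hip1 : (i + 1) ∈ t 0 (Classical.choose hex) :=
      ((colSign_false_iff hT hn).mp spec.1.2.1).1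
    have hr' : ∃ r, r < n ∧ (i + 1) ∈ t r (Classical.choose hex) := ⟨0, by omega, hip1⟩
    have heval := eRaw_eval n (rowShape k) i t hex hr'
    rw [hnone] at heval
    split_ifs at heval <;> exact Option.noConfusion heval
  · intro hgood
    unfold eRaw
    rw [dif_neg]
    rintro ⟨c, hc⟩
    have hmc := (minusCol_iff hT hn).mp hc.1
    exact hmc.2.2 (hgood c hmc.1 hmc.2.1)

/-- The full specification of one application of `eRaw` on a one-row SVT. -/
lemma eRaw_some_spec {n k i : ℕ} {t t' : Filling} (hT : IsSVT n (rowShape k) t)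
    (hn : 2 ≤ n) (hi : 1 ≤ i) (hin : i < n)
    (hsome : eRaw n (rowShape k) i t = some t') :
    IsSVT n (rowShape k) t' ∧ (∀ r c, (t' r c).image (entMap i) = (t r c).image (entMap i)) ∧
      rowMeasure n k t' + 1 = rowMeasure n k t := by
  have hn1 : 1 ≤ n := by omega
  by_cases hex : ∃ c, eBoxCol n (rowShape k 0) t i c
  case neg =>
    unfold eRaw at hsome
    rw [dif_neg hex] at hsome
    simp at hsome
  have spec := Classical.choose_spec hex
  have hck : Classical.choose hex < k := spec.1.1
  have hsign := spec.1.2.1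
  have hmin : ∀ c', MinusCol n (rowShape k 0) t i c' → Classical.choose hex ≤ c' := spec.2
  have hip1 : (i + 1) ∈ t 0 (Classical.choose hex) :=
    ((colSign_false_iff hT hn1).mp hsign).1
  have hnoti : i ∉ t 0 (Classical.choose hex) :=
    ((colSign_false_iff hT hn1).mp hsign).2
  have hr' : ∃ r, r < n ∧ (i + 1) ∈ t r (Classical.choose hex) := ⟨0, by omega, hip1⟩
  have heval := eRaw_eval n (rowShape k) i t hex hr'
  have hr0 : Classical.choose hr' = 0 := by
    rcases Nat.eq_zero_or_pos (Classical.choose hr') with h0 | hpos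
    · exact h0
    · exfalso
      obtain ⟨h1, h2⟩ := Classical.choose_spec hr'
      rw [svt_empty_row hT (by omega) (Classical.choose hex)] at h2
      exact absurd h2 (Finset.notMem_empty _)
  rw [hr0] at heval
  rw [hsome] at heval
  set c := Classical.choose hex with hcdef
  split_ifs at heval with hcase
  · -- Case A: the box to the left also contains i+1
    rw [Option.some.injEq] at heval
    subst heval
    have hc0 : 0 < c := hcase.1
    have hip1' : (i + 1) ∈ t 0 (c - 1) := hcase.2
    have hii : i ∈ t 0 (c - 1) := by
      by_contra hni
      have hm : MinusCol n k t i (c - 1) := (minusCol_iff hT hn1).mpr ⟨by omega, hip1', hni⟩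
      have := hmin (c - 1) hm
      omega
    have hub : ∀ a ∈ t 0 (c - 1), a ≤ i + 1 := fun a ha => row_le hT (by omega) ha hip1
    have hlb : ∀ b ∈ t 0 c, i + 1 ≤ b := fun b hb => row_le hT (by omega) hip1' hb
    set t2 := updateBox (updateBox t 0 (c - 1) ((t 0 (c - 1)).erase (i + 1))) 0 c
      (insert i (t 0 c)) with ht2
    have ev : ∀ r' c', (r' ≠ 0 ∨ (c' ≠ c ∧ c' ≠ c - 1)) → t2 r' c' = t r' c' := by
      intro r' c' hcond
      rw [ht2, updateBox_ne, updateBox_ne] <;> tauto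
    have ev_c : t2 0 c = insert i (t 0 c) := by rw [ht2, updateBox_same]
    have ev_c1 : t2 0 (c - 1) = (t 0 (c - 1)).erase (i + 1) := by
      rw [ht2, updateBox_ne _ _ _ _ (by rintro ⟨-, hcon⟩; omega), updateBox_same]
    refine ⟨isSVT_of_row t2 ?_ ?_ ?_ ?_, ?_, ?_⟩
    · intro c' hc'
      rcases eq_or_ne c' c with rfl | h1
      · rw [ev_c]; exact Finset.insert_nonempty _ _
      · rcases eq_or_ne c' (c - 1) with rfl | h2
        · rw [ev_c1]; exact ⟨i, Finset.mem_erase.mpr ⟨by omega, hii⟩⟩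
        · rw [ev 0 c' (Or.inr ⟨h1, h2⟩)]
          exact hT.boxNonempty 0 c' (by rw [rowShape_zero]; exact hc')
    · intro r' c' hcond
      have hcon2 : r' ≠ 0 ∨ (c' ≠ c ∧ c' ≠ c - 1) := by
        rcases eq_or_ne r' 0 with rfl | hr'
        · right; constructor <;> (intro hceq; subst hceq; exact hcond ⟨rfl, by omega⟩)
        · left; exact hr'
      rw [ev r' c' hcon2]
      exact svt_box_empty hT hcond
    · intro c' a ha
      rcases eq_or_ne c' c with rfl | h1
      · rw [ev_c] at ha
        rcases Finset.mem_insert.mp ha with hai | ha'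
        · omega
        · exact hT.entryBounds 0 _ a ha'
      · rcases eq_or_ne c' (c - 1) with rfl | h2
        · rw [ev_c1] at ha
          exact hT.entryBounds 0 _ a (Finset.mem_of_mem_erase ha)
        · rw [ev 0 c' (Or.inr ⟨h1, h2⟩)] at ha
          exact hT.entryBounds 0 _ a ha
    · intro c0 a b ha hb
      rcases eq_or_ne c0 c with rfl | hne0
      · rw [ev_c] at ha
        rw [ev 0 (c + 1) (Or.inr ⟨by omega, by omega⟩)] at hb
        rcases Finset.mem_insert.mp ha with hai | ha'
        · have h2 := hT.rowWeak 0 c (i + 1) b hip1 hb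
          omega
        · exact hT.rowWeak 0 c a b ha' hb
      · rcases eq_or_ne (c0 + 1) c with hc1 | hne1
        · have hc0eq : c0 = c - 1 := by omega
          rw [hc0eq, ev_c1] at ha
          rw [hc1, ev_c] at hb
          rcases Finset.mem_insert.mp hb with hbi | hb'
          · have h1 := hub a (Finset.mem_of_mem_erase ha)
            have h2 := (Finset.mem_erase.mp ha).1
            omega
          · exact row_le hT (show c - 1 < c by omega) (Finset.mem_of_mem_erase ha) hb'
        · have ha'' : a ∈ t 0 c0 := by
            rcases eq_or_ne c0 (c - 1) with heq | hne2
            · rw [heq, ev_c1] at ha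
              rw [heq]
              exact Finset.mem_of_mem_erase ha
            · rw [ev 0 c0 (Or.inr ⟨hne0, hne2⟩)] at ha; exact ha
          have hb'' : b ∈ t 0 (c0 + 1) := by
            rcases eq_or_ne (c0 + 1) (c - 1) with heq | hne2
            · rw [heq, ev_c1] at hb
              rw [heq]
              exact Finset.mem_of_mem_erase hb
            · rw [ev 0 (c0 + 1) (Or.inr ⟨hne1, hne2⟩)] at hb; exact hb
          exact hT.rowWeak 0 c0 a b ha'' hb''
    · intro r' c'
      rcases eq_or_ne r' 0 with rfl | hr'
      · rcases eq_or_ne c' c with rfl | h1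
        · rw [ev_c]; exact image_entMap_insert hip1
        · rcases eq_or_ne c' (c - 1) with rfl | h2
          · rw [ev_c1]; exact image_entMap_erase hii
          · rw [ev 0 c' (Or.inr ⟨h1, h2⟩)]
      · rw [ev r' c' (Or.inl hr')]
    · have e1 := measure_updateBox (n := n) (k := k)
        (updateBox t 0 (c - 1) ((t 0 (c - 1)).erase (i + 1))) 0 c
        (insert i (t 0 c)) (by omega) hck
      have hmid_c : updateBox t 0 (c - 1) ((t 0 (c - 1)).erase (i + 1)) 0 c = t 0 c :=
        updateBox_ne _ _ _ _ (by rintro ⟨-, hcon⟩; omega)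
      rw [hmid_c] at e1
      have e2 := measure_updateBox (n := n) (k := k) t 0 (c - 1)
        ((t 0 (c - 1)).erase (i + 1)) (by omega) (by omega)
      have e3 : ∑ a ∈ insert i (t 0 c), a = i + ∑ a ∈ t 0 c, a := Finset.sum_insert hnoti
      have e4 : ∑ a ∈ (t 0 (c - 1)).erase (i + 1), a + (i + 1) = ∑ a ∈ t 0 (c - 1), a :=
        Finset.sum_erase_add _ _ hip1'
      rw [← ht2] at e1
      omega
  · -- Case B: no i+1 in the box to the left
    rw [Option.some.injEq] at heval
    subst heval
    set t2 := updateBox t 0 c (insert i ((t 0 c).erase (i + 1))) with ht2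
    have ev : ∀ r' c', (r' ≠ 0 ∨ c' ≠ c) → t2 r' c' = t r' c' := by
      intro r' c' hcond
      rw [ht2, updateBox_ne] ; tauto
    have ev_c : t2 0 c = insert i ((t 0 c).erase (i + 1)) := by rw [ht2, updateBox_same]
    have hsub : ∀ c' x, x ∈ t2 0 c' → x = i ∨ x ∈ t 0 c' := by
      intro c' x hx
      rcases eq_or_ne c' c with rfl | hne
      · rw [ev_c] at hx
        rcases Finset.mem_insert.mp hx with rfl | hx'
        · exact Or.inl rfl
        · exact Or.inr (Finset.mem_of_mem_erase hx')
      · rw [ev 0 c' (Or.inr hne)] at hx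
        exact Or.inr hx
    refine ⟨isSVT_of_row t2 ?_ ?_ ?_ ?_, ?_, ?_⟩
    · intro c' hc'
      rcases eq_or_ne c' c with rfl | h1
      · rw [ev_c]; exact Finset.insert_nonempty _ _
      · rw [ev 0 c' (Or.inr h1)]
        exact hT.boxNonempty 0 c' (by rw [rowShape_zero]; exact hc')
    · intro r' c' hcond
      have hcon2 : r' ≠ 0 ∨ c' ≠ c := by
        rcases eq_or_ne r' 0 with rfl | hr'
        · right; intro hceq; subst hceq; exact hcond ⟨rfl, by omega⟩
        · left; exact hr'
      rw [ev r' c' hcon2]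
      exact svt_box_empty hT hcond
    · intro c' a ha
      rcases hsub c' a ha with hai | ha'
      · omega
      · exact hT.entryBounds 0 c' a ha'
    · intro c0 a b ha hb
      rcases eq_or_ne c0 c with rfl | hne0
      · rw [ev_c] at ha
        rw [ev 0 (c + 1) (Or.inr (by omega))] at hb
        rcases Finset.mem_insert.mp ha with hai | ha'
        · have h2 := hT.rowWeak 0 c (i + 1) b hip1 hb
          omega
        · exact hT.rowWeak 0 c a b (Finset.mem_of_mem_erase ha') hb
      · rcases eq_or_ne (c0 + 1) c with hc1 | hne1
        · rw [ev 0 c0 (Or.inr hne0)] at ha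
          rw [hc1, ev_c] at hb
          have hnotleft : (i + 1) ∉ t 0 (c - 1) := by
            intro hmem
            exact hcase ⟨by omega, hmem⟩
          have hc0c1 : c0 = c - 1 := by omega
          rcases Finset.mem_insert.mp hb with hbi | hb'
          · have h1 : a ≤ i + 1 := hT.rowWeak 0 c0 a (i + 1) ha (by rw [hc1]; exact hip1)
            have h2 : a ≠ i + 1 := by
              intro hceq
              rw [hceq, hc0c1] at ha
              exact hnotleft ha
            omega
          · exact hT.rowWeak 0 c0 a b ha (by rw [hc1]; exact Finset.mem_of_mem_erase hb')
        · rw [ev 0 c0 (Or.inr hne0)] at ha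
          rw [ev 0 (c0 + 1) (Or.inr hne1)] at hb
          exact hT.rowWeak 0 c0 a b ha hb
    · intro r' c'
      rcases eq_or_ne r' 0 with rfl | hr'
      · rcases eq_or_ne c' c with rfl | h1
        · rw [ev_c]; exact image_entMap_replace hip1
        · rw [ev 0 c' (Or.inr h1)]
      · rw [ev r' c' (Or.inl hr')]
    · have e1 := measure_updateBox (n := n) (k := k) t 0 c
        (insert i ((t 0 c).erase (i + 1))) (by omega) hck
      have e3 : ∑ a ∈ insert i ((t 0 c).erase (i + 1)), a
          = i + ∑ a ∈ (t 0 c).erase (i + 1), a :=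
        Finset.sum_insert (fun h => hnoti (Finset.mem_of_mem_erase h))
      have e4 : ∑ a ∈ (t 0 c).erase (i + 1), a + (i + 1) = ∑ a ∈ t 0 c, a :=
        Finset.sum_erase_add _ _ hip1
      rw [← ht2] at e1
      omega

/-- The full specification of one application of `eK` on a one-row SVT. -/
lemma eK_some_spec {n k i : ℕ} {t t' : Filling} (hT : IsSVT n (rowShape k) t)
    (hn : 2 ≤ n) (hi : 1 ≤ i)
    (hsome : eK n (rowShape k) i t = some t') :
    IsSVT n (rowShape k) t' ∧ (∀ r c, (t' r c).image (entMap i) = (t r c).image (entMap i)) ∧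
      rowMeasure n k t' + (i + 1) = rowMeasure n k t ∧
      ((∀ c, c < k → (i + 1) ∈ t 0 c → i ∈ t 0 c) →
        (∀ c, c < k → (i + 1) ∈ t' 0 c → i ∈ t' 0 c)) := by
  by_cases hex : ∃ p : ℕ × ℕ, p.1 < n ∧ p.2 < rowShape k p.1 ∧ i ∈ t p.1 p.2 ∧
      (i + 1) ∈ t p.1 p.2
  case neg =>
    unfold eK at hsome
    rw [dif_neg hex] at hsome
    simp at hsome
  have heval := eK_eval n (rowShape k) i t hex
  have spec := Classical.choose_spec hex
  have hp1 : (Classical.choose hex).1 = 0 := by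
    by_contra h0
    have h := spec.2.1
    rw [rowShape_pos h0] at h
    omega
  rw [hp1] at heval
  rw [hsome, Option.some.injEq] at heval
  subst heval
  have hp2k : (Classical.choose hex).2 < k := by
    have h := spec.2.1
    rw [hp1, rowShape_zero] at h
    exact h
  have hiM : i ∈ t 0 (Classical.choose hex).2 := by rw [← hp1]; exact spec.2.2.1
  have hi1M : (i + 1) ∈ t 0 (Classical.choose hex).2 := by rw [← hp1]; exact spec.2.2.2
  set c2 := (Classical.choose hex).2 with hc2
  set t2 := updateBox t 0 c2 ((t 0 c2).erase (i + 1)) with ht2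
  have ev : ∀ r' c', (r' ≠ 0 ∨ c' ≠ c2) → t2 r' c' = t r' c' := by
    intro r' c' hcond
    rw [ht2, updateBox_ne]; tauto
  have ev_c : t2 0 c2 = (t 0 c2).erase (i + 1) := by rw [ht2, updateBox_same]
  have hsub : ∀ r' c' x, x ∈ t2 r' c' → x ∈ t r' c' := by
    intro r' c' x hx
    rcases eq_or_ne r' 0 with rfl | hr'
    · rcases eq_or_ne c' c2 with rfl | hne
      · rw [ev_c] at hx; exact Finset.mem_of_mem_erase hx
      · rw [ev 0 c' (Or.inr hne)] at hx; exact hx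
    · rw [ev r' c' (Or.inl hr')] at hx; exact hx
  refine ⟨isSVT_of_row t2 ?_ ?_ ?_ ?_, ?_, ?_, ?_⟩
  · intro c' hc'
    rcases eq_or_ne c' c2 with rfl | h1
    · rw [ev_c]; exact ⟨i, Finset.mem_erase.mpr ⟨by omega, hiM⟩⟩
    · rw [ev 0 c' (Or.inr h1)]
      exact hT.boxNonempty 0 c' (by rw [rowShape_zero]; exact hc')
  · intro r' c' hcond
    have hcon2 : r' ≠ 0 ∨ c' ≠ c2 := by
      rcases eq_or_ne r' 0 with rfl | hr'
      · right; intro hceq; subst hceq; exact hcond ⟨rfl, by omega⟩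
      · left; exact hr'
    rw [ev r' c' hcon2]
    exact svt_box_empty hT hcond
  · intro c' a ha
    exact hT.entryBounds 0 c' a (hsub 0 c' a ha)
  · intro c0 a b ha hb
    exact hT.rowWeak 0 c0 a b (hsub 0 c0 a ha) (hsub 0 (c0 + 1) b hb)
  · intro r' c'
    rcases eq_or_ne r' 0 with rfl | hr'
    · rcases eq_or_ne c' c2 with rfl | h1
      · rw [ev_c]; exact image_entMap_erase hiM
      · rw [ev 0 c' (Or.inr h1)]
    · rw [ev r' c' (Or.inl hr')]
  · have e1 := measure_updateBox (n := n) (k := k) t 0 c2 ((t 0 c2).erase (i + 1))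
      (by omega) hp2k
    have e4 : ∑ a ∈ (t 0 c2).erase (i + 1), a + (i + 1) = ∑ a ∈ t 0 c2, a :=
      Finset.sum_erase_add _ _ hi1M
    rw [← ht2] at e1
    omega
  · intro hPt c hc hmem
    rcases eq_or_ne c c2 with rfl | hne
    · rw [ev_c] at hmem
      exact absurd rfl (Finset.mem_erase.mp hmem).1
    · rw [ev 0 c (Or.inr hne)] at hmem ⊢
      exact hPt c hc hmem

/-! #### The Demazure step acts as entry substitution -/

/-- Replace all entries `i+1` by `i` in every box. -/
def substBox (i : ℕ) (t : Filling) : Filling := fun r c => (t r c).image (entMap i)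

/-- Apply the substitutions of a word from left to right. -/
def substList : List ℕ → Filling → Filling
  | [], t => t
  | i :: rest, t => substList rest (substBox i t)

lemma demStep_spec {n k i : ℕ} {t : Filling} (hn : 2 ≤ n) (hi : 1 ≤ i) (hin : i < n)
    (hT : IsSVT n (rowShape k) t) :
    DemStep n (rowShape k) (eK n (rowShape k)) i t (substBox i t) ∧
      IsSVT n (rowShape k) (substBox i t) ∧
      (∀ t2, DemStep n (rowShape k) (eK n (rowShape k)) i t t2 → t2 = substBox i t) := by
  have hn1 : 1 ≤ n := by omega
  -- Phase 1 : apply eRaw as long as possible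
  have hphase1 := maxApply_exists (eRaw n (rowShape k) i) (rowMeasure n k)
    (fun u => IsSVT n (rowShape k) u ∧ substBox i u = substBox i t) ?hg1 t ⟨hT, rfl⟩
  case hg1 =>
    intro u hu u' hsome
    obtain ⟨hsvt, himg, hmeas⟩ := eRaw_some_spec hu.1 hn hi hin hsome
    have hsb : substBox i u' = substBox i t := by
      rw [← hu.2]
      funext r c
      exact himg r c
    exact ⟨⟨hsvt, hsb⟩, by omega⟩
  obtain ⟨t1, hmax1, ht1svt, ht1sb⟩ := hphase1
  have hgood : ∀ c, c < k → (i + 1) ∈ t1 0 c → i ∈ t1 0 c :=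
    (eRaw_none_iff ht1svt hn1).mp hmax1.2
  -- Phase 2 : apply eK as long as possible
  have hphase2 := maxApply_exists (eK n (rowShape k) i) (rowMeasure n k)
    (fun u => IsSVT n (rowShape k) u ∧ substBox i u = substBox i t ∧
      (∀ c, c < k → (i + 1) ∈ u 0 c → i ∈ u 0 c)) ?hg2 t1 ⟨ht1svt, ht1sb, hgood⟩
  case hg2 =>
    intro u hu u' hsome
    obtain ⟨hsvt, himg, hmeas, hP⟩ := eK_some_spec hu.1 hn hi hsome
    refine ⟨⟨hsvt, ?_, hP hu.2.2⟩, by omega⟩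
    rw [← hu.2.1]
    funext r c
    exact himg r c
  obtain ⟨t2, hmax2, ht2svt, ht2sb, ht2P⟩ := hphase2
  have hno : ∀ r c, (i + 1) ∉ t2 r c := by
    intro r c hmem
    by_cases hrc : r = 0 ∧ c < k
    case neg =>
      rw [svt_box_empty ht2svt hrc] at hmem
      exact absurd hmem (Finset.notMem_empty _)
    obtain ⟨rfl, hck⟩ := hrc
    have hiM := ht2P c hck hmem
    have hnone := (eK_none_iff n (rowShape k) i t2).mp hmax2.2
    apply hnone
    refine ⟨(0, c), ?_, ?_, hiM, hmem⟩
    · show 0 < n; omega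
    · show c < rowShape k 0
      rw [rowShape_zero]; exact hck
  have ht2eq : t2 = substBox i t := by
    funext r c
    have h1 : (t2 r c).image (entMap i) = t2 r c := image_entMap_of_not_mem (hno r c)
    rw [← ht2sb]
    exact h1.symm
  refine ⟨⟨t1, hmax1, ht2eq ▸ hmax2⟩, ht2eq ▸ ht2svt, ?_⟩
  intro t2' hstep
  obtain ⟨t1', he', hK'⟩ := hstep
  have h11 : t1' = t1 := maxApply_unique _ he' hmax1
  subst h11
  have h22 : t2' = t2 := maxApply_unique _ hK' hmax2
  rw [h22, ht2eq]

lemma substList_apply : ∀ (word : List ℕ) (t : Filling) (r c : ℕ),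
    substList word t r c = (t r c).image (Phi word) := by
  intro word
  induction word with
  | nil =>
    intro t r c
    exact (Finset.image_id' (s := t r c)).symm
  | cons i rest ih =>
    intro t r c
    show substList rest (substBox i t) r c = _
    rw [ih (substBox i t) r c]
    show ((t r c).image (entMap i)).image (Phi rest) = (t r c).image (Phi (i :: rest))
    rw [Finset.image_image]
    rfl

lemma demReach_iff {n k : ℕ} (hn : 2 ≤ n) :
    ∀ (word : List ℕ), (∀ j ∈ word, 1 ≤ j ∧ j < n) → ∀ t : Filling,
      IsSVT n (rowShape k) t →
      IsSVT n (rowShape k) (substList word t) ∧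
      (∀ u, DemReach n (rowShape k) (eK n (rowShape k)) word t u ↔ u = substList word t) := by
  intro word
  induction word with
  | nil =>
    intro _ t hT
    exact ⟨hT, fun u => ⟨fun h => h.symm, fun h => h.symm⟩⟩
  | cons i rest ih =>
    intro hl t hT
    have hi := hl i (List.mem_cons_self)
    have hD := demStep_spec hn hi.1 hi.2 hT
    have hih := ih (fun j hj => hl j (List.mem_cons_of_mem i hj)) (substBox i t) hD.2.1
    refine ⟨hih.1, ?_⟩
    intro u
    constructor
    · rintro ⟨t2, hstep, hrest⟩
      have heq2 := hD.2.2 t2 hstep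
      subst heq2
      exact (hih.2 u).mp hrest
    · intro hu
      exact ⟨substBox i t, hD.1, (hih.2 u).mpr hu⟩

lemma uTab_row {k : ℕ} (r c : ℕ) :
    uTab (rowShape k) r c = if r = 0 ∧ c < k then {1} else ∅ := by
  unfold uTab
  rcases eq_or_ne r 0 with rfl | hr
  · rw [rowShape_zero]
    by_cases hc : c < k
    · rw [if_pos hc, if_pos ⟨rfl, hc⟩]
    · rw [if_neg hc, if_neg (by tauto)]
  · rw [rowShape_pos hr, if_neg (by omega), if_neg (by tauto)]

lemma substList_eq_uTab_iff {n k : ℕ} {word : List ℕ} {t : Filling}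
    (hT : IsSVT n (rowShape k) t) :
    substList word t = uTab (rowShape k) ↔
      ∀ c a, c < k → a ∈ t 0 c → Phi word a = 1 := by
  constructor
  · intro h c a hc ha
    have hmem : Phi word a ∈ substList word t 0 c := by
      rw [substList_apply]
      exact Finset.mem_image_of_mem _ ha
    rw [h, uTab_row, if_pos ⟨rfl, hc⟩] at hmem
    exact Finset.mem_singleton.mp hmem
  · intro h
    funext r c
    rw [substList_apply, uTab_row]
    by_cases hrc : r = 0 ∧ c < k
    · obtain ⟨rfl, hck⟩ := hrc
      rw [if_pos ⟨rfl, hck⟩]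
      ext x
      rw [Finset.mem_image, Finset.mem_singleton]
      constructor
      · rintro ⟨a, ha, rfl⟩
        exact h c a hck ha
      · rintro rfl
        obtain ⟨a, ha⟩ := hT.boxNonempty 0 c (by rw [rowShape_zero]; exact hck)
        exact ⟨a, ha, h c a hck ha⟩
    · rw [if_neg hrc, svt_box_empty hT hrc, Finset.image_empty]

/-- Statement 13, part 1 (as a standalone lemma). -/
lemma kdem_row_eq {n k : ℕ} (hn : 2 ≤ n) {w : Equiv.Perm ℕ} {word : List ℕ}
    (hred : IsReducedWord n w word) :
    KDem n (rowShape k) (eK n (rowShape k)) word =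
      {t | IsSVT n (rowShape k) t ∧ ∀ r c a, a ∈ t r c → a ≤ w 1} := by
  ext t
  simp only [KDem, Set.mem_setOf_eq]
  constructor
  · rintro ⟨hT, hreach⟩
    refine ⟨hT, ?_⟩
    intro r c a ha
    by_cases hrc : r = 0 ∧ c < k
    case neg =>
      rw [svt_box_empty hT hrc] at ha
      exact absurd ha (Finset.notMem_empty a)
    obtain ⟨rfl, hck⟩ := hrc
    have heq := ((demReach_iff hn word hred.1 t hT).2 _).mp hreach
    have hphi : Phi word a = 1 := (substList_eq_uTab_iff hT).mp heq.symm c a hck ha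
    have ha1 := (hT.entryBounds 0 c a ha).1
    exact (phi_eq_one_iff hred a ha1).mp hphi
  · rintro ⟨hT, hbound⟩
    refine ⟨hT, ?_⟩
    apply ((demReach_iff hn word hred.1 t hT).2 _).mpr
    apply Eq.symm
    apply (substList_eq_uTab_iff hT).mpr
    intro c a hc ha
    have ha1 := (hT.entryBounds 0 c a ha).1
    exact (phi_eq_one_iff hred a ha1).mpr (hbound 0 c a ha)

end Aux

/-- for the one-row shape `(k)`, the K-Demazure crystal of any reduced
word of `w ∈ Sₙ` consists exactly of the one-row set-valued tableaux all of whose entries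
are `≤ w(1)`.  In particular it depends only on `w(1)`, i.e. only on the coset
`w⟨s₂,…,s_{n-1}⟩`, whose minimal length representative is `s_{w(1)-1} ⋯ s₂ s₁`. -/
theorem kdem_single_row (n k : ℕ) (hn : 2 ≤ n) (hk : 1 ≤ k)
    (w : Equiv.Perm ℕ) (word : List ℕ) (hred : IsReducedWord n w word) :
    (KDem n (rowShape k) (eK n (rowShape k)) word =
      {t | IsSVT n (rowShape k) t ∧ ∀ r c a, a ∈ t r c → a ≤ w 1}) ∧
    (∀ (w' : Equiv.Perm ℕ) (word' : List ℕ), IsReducedWord n w' word' → w' 1 = w 1 →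
      KDem n (rowShape k) (eK n (rowShape k)) word' =
        KDem n (rowShape k) (eK n (rowShape k)) word) ∧
    (∀ mword : List ℕ, mword = ((List.range (w 1 - 1)).map (· + 1)).reverse →
      IsReducedWord n (wordPerm mword) mword ∧
      (wordPerm mword)⁻¹ * w ∈ parabolic n ∧
      ∀ v : Equiv.Perm ℕ, v⁻¹ * w ∈ parabolic n →
        permLength n (wordPerm mword) ≤ permLength n v) := by
  have hw1Icc : 1 ≤ w 1 ∧ w 1 ≤ n := by
    have h := wordPerm_mem_Icc n word hred.1 1 ⟨le_rfl, by omega⟩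
    rw [hred.2.1] at h
    exact h
  refine ⟨kdem_row_eq hn hred, ?_, ?_⟩
  · intro w' word' hred' hw'
    rw [kdem_row_eq hn hred', kdem_row_eq hn hred, hw']
  · intro mword hm
    subst hm
    set L := ((List.range (w 1 - 1)).map (· + 1)).reverse with hL
    have hmlen : L.length = w 1 - 1 := by
      rw [hL, List.length_reverse, List.length_map, List.length_range]
    have hletters : ∀ j ∈ L, 1 ≤ j ∧ j < n := by
      intro j hj
      rw [hL, List.mem_reverse, List.mem_map] at hj
      obtain ⟨x, hx, rfl⟩ := hj
      rw [List.mem_range] at hx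
      omega
    have hcyc : (wordPerm L) 1 = w 1 := by
      rw [hL, wordPerm_range_cycle (w 1 - 1)]
      omega
    have hredm : IsReducedWord n (wordPerm L) L := by
      refine ⟨hletters, rfl, ?_⟩
      intro word'' hl'' heq''
      have hb := wordPerm_apply_le word'' 1
      rw [heq'', hcyc] at hb
      rw [hmlen]
      omega
    refine ⟨hredm, ?_, ?_⟩
    · -- (wordPerm L)⁻¹ * w lies in the parabolic subgroup
      have hword_v : wordPerm (L.reverse ++ word) = (wordPerm L)⁻¹ * w := by
        rw [wordPerm_append, wordPerm_reverse, hred.2.1]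
      have hlvletters : ∀ j ∈ L.reverse ++ word, 1 ≤ j ∧ j < n := by
        intro j hj
        rcases List.mem_append.mp hj with hj | hj
        · exact hletters j (List.mem_reverse.mp hj)
        · exact hred.1 j hj
      have hfix1 : ((wordPerm L)⁻¹ * w) 1 = 1 := by
        rw [Equiv.Perm.mul_apply, ← hcyc]
        exact Equiv.Perm.inv_apply_self (wordPerm L) 1
      apply mem_parabolic_of_fix n le_rfl
      intro x hx
      have hfixout : ∀ y, y < 1 ∨ n < y → ((wordPerm L)⁻¹ * w) y = y := by
        intro y hy
        rw [← hword_v]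
        exact wordPerm_fix (L.reverse ++ word) 1 n
          (fun j hj => ⟨(hlvletters j hj).1, by have := (hlvletters j hj).2; omega⟩) y hy
      rcases lt_or_ge x 2 with hx2 | hx2
      · exfalso
        rcases lt_or_ge x 1 with hx1 | hx1
        · exact hx (hfixout x (Or.inl hx1))
        · have hx1' : x = 1 := by omega
          rw [hx1'] at hx
          exact hx hfix1
      · refine ⟨hx2, ?_⟩
        by_contra hxn
        push_neg at hxn
        exact hx (hfixout x (Or.inr hxn))
    · -- minimality of the coset representative
      intro v hv
      have hv1 : v 1 = w 1 := by
        have h1 : (v⁻¹ * w) 1 = 1 := parabolic_fix_one hv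
        rw [Equiv.Perm.mul_apply] at h1
        have h2 := congrArg v h1
        rw [Equiv.Perm.apply_inv_self] at h2
        exact h2.symm
      have hle : permLength n (wordPerm L) ≤ w 1 - 1 := by
        apply Nat.sInf_le
        exact ⟨L, hletters, rfl, hmlen⟩
      have hvword : ∃ lw : List ℕ, (∀ j ∈ lw, 1 ≤ j ∧ j < n) ∧ wordPerm lw = v := by
        obtain ⟨lp, hlp, hlpv⟩ := parabolic_has_word (Subgroup.inv_mem _ hv)
        refine ⟨word ++ lp, ?_, ?_⟩
        · intro j hj
          rcases List.mem_append.mp hj with hj | hj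
          · exact hred.1 j hj
          · exact hlp j hj
        · rw [wordPerm_append, hred.2.1, hlpv]
          group
      obtain ⟨lw, hlw, hlwv⟩ := hvword
      have hSnonempty : {l | ∃ word'' : List ℕ, (∀ i ∈ word'', 1 ≤ i ∧ i < n) ∧
          wordPerm word'' = v ∧ word''.length = l}.Nonempty :=
        ⟨lw.length, lw, hlw, hlwv, rfl⟩
      have hSlb : ∀ l ∈ {l | ∃ word'' : List ℕ, (∀ i ∈ word'', 1 ≤ i ∧ i < n) ∧
          wordPerm word'' = v ∧ word''.length = l}, w 1 - 1 ≤ l := by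
        rintro l ⟨word'', _, heq'', hlen''⟩
        have hb := wordPerm_apply_le word'' 1
        rw [heq'', hv1] at hb
        omega
      have hge : w 1 - 1 ≤ permLength n v := hSlb _ (Nat.sInf_mem hSnonempty)
      omega


end SVTCrystal

end
end
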